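/- arXiv:2301.06368 — 6 statements merged into one kernel-verified Lean document; each statement's English description precedes it below -/
import Mathlib

section
/- The dual cone of FW_n(k) with respect to the trace inner product is {S ∈ S^n : S_{J,J} ⪰ 0 for all J ⊆ [n] with |J| = k}, i.e., the set of symmetric matrices all of whose k×k principal submatrices are positive semidefinite. -/
open Matrix Finset

/-- Embed a matrix indexed by a `k`-subset `J` of `Fin n` as the principal submatrix
indexed by `J` of an `n × n` matrix, with zeros elsewhere (the map `S ↦ S^{→n}`). -/
def Matrix.embed {n : ℕ} (J : Finset (Fin n)) (S : Matrix ↥J ↥J ℝ) :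
    Matrix (Fin n) (Fin n) ℝ := fun i j =>
  if hi : i ∈ J then if hj : j ∈ J then S ⟨i, hi⟩ ⟨j, hj⟩ else 0 else 0

/-- The factor-width-`k` cone `FW_n(k)`: matrices expressible as a finite sum of
rank-one terms `x xᵀ` where each `x` has at most `k` nonzero entries. -/
def FW (n k : ℕ) : Set (Matrix (Fin n) (Fin n) ℝ) :=
  {X | ∃ (N : ℕ) (v : Fin N → (Fin n → ℝ)),
    (∀ i, (Finset.univ.filter (fun j => v i j ≠ 0)).card ≤ k) ∧
    X = ∑ i, Matrix.vecMulVec (v i) (v i)}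

/-- Trace formula for rank-one updates: `tr(S · x xᵀ) = xᵀ S x`. -/
lemma trace_mul_vecMulVec {n : ℕ} (S : Matrix (Fin n) (Fin n) ℝ) (x : Fin n → ℝ) :
    (S * Matrix.vecMulVec x x).trace = x ⬝ᵥ S *ᵥ x := by
  simp only [Matrix.trace, Matrix.diag, Matrix.mul_apply, Matrix.vecMulVec_apply,
    dotProduct, Matrix.mulVec, Finset.mul_sum]
  exact Finset.sum_congr rfl fun i _ => Finset.sum_congr rfl fun j _ => by ring

/-- If `x` vanishes outside `J`, the quadratic form of `S` at `x` equals the quadratic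
form of the `J`-principal submatrix at the restriction of `x`. -/
lemma quad_restrict {n : ℕ} (S : Matrix (Fin n) (Fin n) ℝ) (J : Finset (Fin n))
    (x : Fin n → ℝ) (hx : ∀ i, i ∉ J → x i = 0) :
    x ⬝ᵥ S *ᵥ x =
      (fun i : ↥J => x i) ⬝ᵥ
        (S.submatrix (fun i : ↥J => (i : Fin n)) (fun j : ↥J => (j : Fin n))) *ᵥ
        (fun i : ↥J => x i) := by
  have hmv : ∀ i : Fin n, (S *ᵥ x) i = ∑ j ∈ J, S i j * x j := by
    intro i
    rw [Matrix.mulVec, dotProduct]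
    exact (Finset.sum_subset (Finset.subset_univ J)
      (fun j _ hj => by rw [hx j hj, mul_zero])).symm
  have lhs : x ⬝ᵥ S *ᵥ x = ∑ i ∈ J, x i * ∑ j ∈ J, S i j * x j := by
    rw [dotProduct]
    rw [← Finset.sum_subset (Finset.subset_univ J)
      (fun i _ hi => by rw [hx i hi, zero_mul])]
    exact Finset.sum_congr rfl fun i _ => by rw [hmv]
  rw [lhs, dotProduct]
  rw [← Finset.sum_coe_sort J (fun i => x i * ∑ j ∈ J, S i j * x j)]
  refine Finset.sum_congr rfl fun i _ => ?_
  congr 1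
  rw [Matrix.mulVec, dotProduct,
    ← Finset.sum_coe_sort J (fun j => S (i : Fin n) j * x j)]
  rfl

/-- the dual cone of `FW n k` w.r.t. the trace inner product is the
set of symmetric matrices all of whose `k × k` principal submatrices are PSD. -/
theorem factor_width_dual_cone {n k : ℕ} (hk : 1 ≤ k) (hkn : k ≤ n) :
    {S : Matrix (Fin n) (Fin n) ℝ | S.IsSymm ∧ ∀ X ∈ FW n k, 0 ≤ (S * X).trace} =
    {S : Matrix (Fin n) (Fin n) ℝ | S.IsSymm ∧ ∀ J : Finset (Fin n), J.card = k →
      (S.submatrix (fun i : ↥J => (i : Fin n)) (fun j : ↥J => (j : Fin n))).PosSemidef} := by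
  ext S
  simp only [Set.mem_setOf_eq]
  constructor
  · rintro ⟨hsym, hdual⟩
    refine ⟨hsym, fun J hJ => ?_⟩
    refine Matrix.PosSemidef.of_dotProduct_mulVec_nonneg ?_ ?_
    · -- Hermitian: real symmetric submatrix
      ext i j
      simp only [Matrix.conjTranspose_apply, Matrix.submatrix_apply, star_trivial]
      exact congrFun (congrFun hsym _) _
    · intro y
      classical
      set x : Fin n → ℝ := fun i => if h : i ∈ J then y ⟨i, h⟩ else 0 with hxdef
      have hx0 : ∀ i, i ∉ J → x i = 0 := fun i hi => by simp [hxdef, hi]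
      have hmem : Matrix.vecMulVec x x ∈ FW n k := by
        refine ⟨1, fun _ => x, fun _ => ?_, by simp⟩
        calc (Finset.univ.filter (fun j => x j ≠ 0)).card
            ≤ J.card := Finset.card_le_card (fun j hj => by
              by_contra h
              exact (Finset.mem_filter.mp hj).2 (hx0 j h))
          _ = k := hJ
      have h := hdual _ hmem
      rw [trace_mul_vecMulVec, quad_restrict S J x hx0] at h
      have hy : (fun i : ↥J => x i) = y := by
        funext i; simp [hxdef, i.2]
      rw [hy] at h
      simpa using h
  · rintro ⟨hsym, hpsd⟩
    refine ⟨hsym, ?_⟩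
    rintro X ⟨N, v, hcard, rfl⟩
    rw [Finset.mul_sum, Matrix.trace_sum]
    refine Finset.sum_nonneg fun i _ => ?_
    rw [trace_mul_vecMulVec]
    classical
    obtain ⟨J, hTJ, -, hJk⟩ := Finset.exists_subsuperset_card_eq
      (Finset.subset_univ (Finset.univ.filter (fun j => v i j ≠ 0)))
      (hcard i) (by simpa using hkn)
    have hx0 : ∀ j, j ∉ J → v i j = 0 := by
      intro j hj
      by_contra h
      exact hj (hTJ (Finset.mem_filter.mpr ⟨Finset.mem_univ j, h⟩))
    rw [quad_restrict S J (v i) hx0]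
    have h := (hpsd J hJk).dotProduct_mulVec_nonneg (fun j : ↥J => v i j)
    simpa using h
end

section
/- Let k divide n and let Y = {Y_J : J ⊆ [n], |J| = k} be a collection of positive definite k×k matrices, and X = Σ_{|J|=k} (Y_J)^{→n}. Then there exist C(n−1,k−1) positive definite n×n matrices Z_1, …, Z_{C(n−1,k−1)} such that X = Σ_i Z_i and Σ_i log(det(Z_i)) = Σ_{|J|=k} log(det(Y_J)). -/
open Matrix Finset

set_option linter.unusedSectionVars false
set_option linter.unusedVariables false
set_option maxHeartbeats 1000000

namespace BarAux

variable {p : Type*} [Fintype p] [DecidableEq p]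

lemma posDef_smul {M : Matrix p p ℝ} (hM : M.PosDef) {c : ℝ} (hc : 0 < c) :
    (c • M).PosDef := by
  refine Matrix.PosDef.of_dotProduct_mulVec_pos ?_ (fun x hx => ?_)
  · unfold Matrix.IsHermitian
    rw [conjTranspose_smul, hM.1.eq]
    simp
  · rw [smul_mulVec, dotProduct_smul]
    exact mul_pos hc (by simpa using hM.dotProduct_mulVec_pos hx)

lemma posDef_submatrix' {m : Type*} [Fintype m] [DecidableEq m] {M : Matrix p p ℝ}
    (hM : M.PosDef) (e : m ≃ p) : (M.submatrix e e).PosDef := by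
  refine Matrix.PosDef.of_dotProduct_mulVec_pos ?_ (fun x hx => ?_)
  · have := hM.1
    unfold Matrix.IsHermitian at *
    rw [conjTranspose_submatrix, this]
  · rw [submatrix_mulVec_equiv]
    have : star x ⬝ᵥ ((M *ᵥ (x ∘ e.symm)) ∘ e) = star (x ∘ e.symm) ⬝ᵥ (M *ᵥ (x ∘ e.symm)) := by
      simp only [dotProduct]
      exact Fintype.sum_equiv e _ _ (fun j => by simp)
    rw [this]
    refine hM.dotProduct_mulVec_pos (fun h0 => hx ?_)
    funext a
    have := congrFun h0 (e a)
    simpa using this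

lemma trace_eq_sum_eigenvalues {M : Matrix p p ℝ} (hM : M.IsHermitian) :
    M.trace = ∑ i, hM.eigenvalues i := by
  simpa using hM.trace_eq_sum_eigenvalues

lemma logdet_le_trace {M : Matrix p p ℝ} (hM : M.PosDef) :
    Real.log M.det ≤ M.trace - Fintype.card p := by
  rw [hM.isHermitian.det_eq_prod_eigenvalues, trace_eq_sum_eigenvalues hM.isHermitian]
  simp only [RCLike.ofReal_real_eq_id, id_eq]
  have h1 : ∀ i : p, (hM.isHermitian.eigenvalues i : ℝ) ≠ 0 := fun i => (hM.eigenvalues_pos i).ne'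
  rw [Real.log_prod (fun i _ => h1 i)]
  have : ∀ i : p, Real.log (hM.isHermitian.eigenvalues i) ≤ hM.isHermitian.eigenvalues i - 1 :=
    fun i => Real.log_le_sub_one_of_pos (hM.eigenvalues_pos i)
  calc ∑ i, Real.log (hM.isHermitian.eigenvalues i)
      ≤ ∑ i, (hM.isHermitian.eigenvalues i - 1) := Finset.sum_le_sum fun i _ => this i
    _ = ∑ i, hM.isHermitian.eigenvalues i - Fintype.card p := by
        rw [Finset.sum_sub_distrib]; simp [Finset.card_univ]


lemma posDef_sum {ι : Type*} [Fintype ι] [Nonempty ι]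
    (B : ι → Matrix p p ℝ) (hB : ∀ i, (B i).PosDef) : (∑ i, B i).PosDef := by
  classical
  obtain ⟨i₀⟩ := ‹Nonempty ι›
  have h : ∑ i, B i = B i₀ + ∑ i ∈ univ.erase i₀, B i := by
    rw [← Finset.add_sum_erase _ _ (mem_univ i₀)]
  rw [h]
  refine (hB i₀).add_posSemidef ?_
  refine Finset.sum_induction _ _ (fun a b ha hb => ha.add hb) Matrix.PosSemidef.zero ?_
  exact fun i _ => (hB i).posSemidef



open scoped MatrixOrder in
lemma logdet_le_logdet_add {W B : Matrix p p ℝ} (hW : W.PosDef) (hB : B.PosDef) :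
    Real.log B.det ≤ (W⁻¹ * B).trace + Real.log W.det - Fintype.card p := by
  have hWinv : W⁻¹.PosDef := hW.inv
  set S := CFC.sqrt W⁻¹ with hS
  have hSherm : S.IsHermitian := (nonneg_iff_posSemidef.1 (CFC.sqrt_nonneg W⁻¹)).isHermitian
  have hSS : S * S = W⁻¹ := CFC.sqrt_mul_sqrt_self W⁻¹ (nonneg_iff_posSemidef.2 hWinv.posSemidef)
  -- S is invertible since det S ^ 2 = det W⁻¹ ≠ 0
  have hdetW : 0 < W.det := hW.det_pos
  have hdetWinv : 0 < W⁻¹.det := hW.inv.det_pos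
  have hdetS2 : S.det * S.det = W⁻¹.det := by rw [← det_mul, hSS]
  have hdetS : S.det ≠ 0 := by
    intro h; rw [h, mul_zero] at hdetS2; exact hdetWinv.ne hdetS2
  -- M := S * B * S is PosDef
  have hM : (S * B * S).PosDef := by
    have := hB.posSemidef.mul_mul_conjTranspose_same S
    rw [hSherm.eq] at this
    refine Matrix.PosDef.of_dotProduct_mulVec_pos this.1 (fun x hx => lt_of_le_of_ne (this.dotProduct_mulVec_nonneg x) ?_)
    intro h
    -- if quadratic form is zero... use that S x ≠ 0
    have hSx : S *ᵥ x ≠ 0 := by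
      intro h0
      apply hx
      have : S.mulVec.Injective := by
        rw [Matrix.mulVec_injective_iff_isUnit]
        exact (Matrix.isUnit_iff_isUnit_det _).2 hdetS.isUnit
      have h1 : S *ᵥ x = S *ᵥ 0 := by simpa using h0
      exact this h1
    have hpos := hB.dotProduct_mulVec_pos hSx
    have heq : star x ⬝ᵥ (S * B * S) *ᵥ x = star (S *ᵥ x) ⬝ᵥ B *ᵥ (S *ᵥ x) := by
      have hrw : S * B * S = Sᴴ * B * S := by rw [hSherm.eq]
      rw [hrw, ← Matrix.mulVec_mulVec, ← Matrix.mulVec_mulVec, dotProduct_mulVec,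
        ← Matrix.star_mulVec]
    rw [heq] at h
    rw [← h] at hpos
    exact lt_irrefl _ hpos
  have key := logdet_le_trace hM
  have htr : (S * B * S).trace = (W⁻¹ * B).trace := by
    rw [trace_mul_comm, ← mul_assoc, hSS]
  have hdet : (S * B * S).det = W⁻¹.det * B.det := by
    rw [det_mul, det_mul, ← hdetS2]; ring
  rw [htr, hdet] at key
  rw [Real.log_mul hdetWinv.ne' hB.det_pos.ne', det_nonsing_inv, Ring.inverse_eq_inv',
    Real.log_inv] at key
  linarith [key]

lemma sum_logdet_le {ι : Type*} [Fintype ι] [Nonempty ι] (B : ι → Matrix p p ℝ)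
    (hB : ∀ i, (B i).PosDef) :
    ∑ i, Real.log (B i).det ≤
      (Fintype.card ι : ℝ) * Real.log (((Fintype.card ι : ℝ)⁻¹) • ∑ i, B i).det := by
  classical
  have hcard : (0:ℝ) < Fintype.card ι := by
    exact_mod_cast Fintype.card_pos
  have hsum : (∑ i, B i).PosDef := posDef_sum B hB
  set W : Matrix p p ℝ := ((Fintype.card ι : ℝ)⁻¹) • ∑ i, B i with hWdef
  have hW : W.PosDef := posDef_smul hsum (by positivity)
  have hkey : ∀ i, Real.log (B i).det ≤ (W⁻¹ * B i).trace + Real.log W.det - Fintype.card p :=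
    fun i => logdet_le_logdet_add hW (hB i)
  have hsum2 : ∑ i, Real.log (B i).det ≤
      (∑ i, (W⁻¹ * B i).trace) + (Fintype.card ι : ℝ) * (Real.log W.det - Fintype.card p) := by
    calc ∑ i, Real.log (B i).det
        ≤ ∑ i, ((W⁻¹ * B i).trace + Real.log W.det - Fintype.card p) :=
          Finset.sum_le_sum fun i _ => hkey i
      _ = (∑ i, (W⁻¹ * B i).trace) + (Fintype.card ι : ℝ) * (Real.log W.det - Fintype.card p) := by
          rw [Finset.sum_sub_distrib, Finset.sum_add_distrib]
          simp only [Finset.sum_const, Finset.card_univ, nsmul_eq_mul]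
          ring
  have htrace : ∑ i, (W⁻¹ * B i).trace = (Fintype.card ι : ℝ) * Fintype.card p := by
    have h1 : ∑ i, (W⁻¹ * B i).trace = (W⁻¹ * ∑ i, B i).trace := by
      rw [Matrix.mul_sum, trace_sum]
    have h2 : (∑ i, B i) = (Fintype.card ι : ℝ) • W := by
      rw [hWdef, smul_smul, mul_inv_cancel₀ hcard.ne', one_smul]
    rw [h1, h2, Matrix.mul_smul, trace_smul, Matrix.nonsing_inv_mul _ hW.det_pos.ne'.isUnit]
    simp [trace_one]
  rw [htrace] at hsum2
  calc ∑ i, Real.log (B i).det ≤ _ := hsum2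
    _ = (Fintype.card ι : ℝ) * Real.log W.det := by ring


variable {n k : ℕ}

/-- permutations sending `A` onto `B` -/
noncomputable def permsTo (A B : Finset (Fin n)) : Finset (Equiv.Perm (Fin n)) :=
  univ.filter (fun σ => A.image ⇑σ = B)

lemma mem_permsTo {A B : Finset (Fin n)} {σ : Equiv.Perm (Fin n)} :
    σ ∈ permsTo A B ↔ A.image ⇑σ = B := by simp [permsTo]

lemma exists_perm_image (A B : Finset (Fin n)) (h : A.card = B.card) :
    ∃ σ : Equiv.Perm (Fin n), A.image ⇑σ = B := by
  classical
  have e₁ : {x : Fin n // x ∈ A} ≃ {x : Fin n // x ∈ B} :=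
    Fintype.equivOfCardEq (by simp [Fintype.card_coe, h])
  have e₂ : {x : Fin n // ¬ x ∈ A} ≃ {x : Fin n // ¬ x ∈ B} :=
    Fintype.equivOfCardEq (by simp [Fintype.card_subtype_compl, Fintype.card_coe, h])
  refine ⟨Equiv.subtypeCongr e₁ e₂, ?_⟩
  apply Finset.eq_of_subset_of_card_le
  · intro b hb
    rw [Finset.mem_image] at hb
    obtain ⟨a, ha, rfl⟩ := hb
    have : Equiv.subtypeCongr e₁ e₂ a = ↑(e₁ ⟨a, ha⟩) := by
      simp [Equiv.subtypeCongr, ha]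
    rw [this]
    exact (e₁ ⟨a, ha⟩).2
  · rw [Finset.card_image_of_injective _ (Equiv.injective _), h]

lemma card_permsTo_eq {A B A' B' : Finset (Fin n)} (hAB : A.card = B.card)
    (hA'B' : A'.card = B'.card) (hAA' : A.card = A'.card) :
    (permsTo A B).card = (permsTo A' B').card := by
  obtain ⟨ρ₁, hρ₁⟩ := exists_perm_image A' A hAA'.symm
  obtain ⟨ρ₂, hρ₂⟩ := exists_perm_image B B' (hAB.symm.trans (hAA'.trans hA'B'))
  refine Finset.card_bij' (fun σ _ => ρ₂ * σ * ρ₁) (fun τ _ => ρ₂⁻¹ * τ * ρ₁⁻¹) ?_ ?_ ?_ ?_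
  · intro σ hσ
    rw [mem_permsTo] at hσ ⊢
    have : ⇑(ρ₂ * σ * ρ₁) = ⇑ρ₂ ∘ ⇑σ ∘ ⇑ρ₁ := by
      funext x; simp [Equiv.Perm.mul_apply]
    rw [this, ← Function.comp_assoc, ← Finset.image_image, ← Finset.image_image, hρ₁, hσ, hρ₂]
  · intro τ hτ
    rw [mem_permsTo] at hτ ⊢
    have : ⇑(ρ₂⁻¹ * τ * ρ₁⁻¹) = ⇑ρ₂⁻¹ ∘ ⇑τ ∘ ⇑ρ₁⁻¹ := by
      funext x; simp [Equiv.Perm.mul_apply]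
    have h1 : A.image ⇑ρ₁⁻¹ = A' := by
      rw [← hρ₁, Finset.image_image]
      simp [Function.comp_def, Finset.image_id']
    have h2 : B'.image ⇑ρ₂⁻¹ = B := by
      rw [← hρ₂, Finset.image_image]
      simp [Function.comp_def, Finset.image_id']
    rw [this, ← Function.comp_assoc, ← Finset.image_image, ← Finset.image_image, h1, hτ, h2]
  · intro σ _; group
  · intro τ _; group

lemma card_filter_card_eq (hk : k ≤ n) :
    (univ.filter (fun J : Finset (Fin n) => J.card = k)).card = n.choose k := by
  have : univ.filter (fun J : Finset (Fin n) => J.card = k) = Finset.powersetCard k univ := by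
    ext J; simp [Finset.mem_powersetCard]
  rw [this, Finset.card_powersetCard, Finset.card_univ, Fintype.card_fin]

lemma sum_perm_image {M : Type*} [AddCommMonoid M] (A : Finset (Fin n)) (hA : A.card = k)
    (g : Finset (Fin n) → M) :
    ∑ σ : Equiv.Perm (Fin n), g (A.image ⇑σ) =
      (permsTo A A).card • ∑ J ∈ univ.filter (fun J : Finset (Fin n) => J.card = k), g J := by
  classical
  have h1 : (univ : Finset (Equiv.Perm (Fin n))) =
      (univ.filter (fun J : Finset (Fin n) => J.card = k)).biUnion (fun J => permsTo A J) := by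
    ext σ
    simp only [mem_univ, true_iff, Finset.mem_biUnion, mem_filter, mem_permsTo]
    exact ⟨A.image ⇑σ, ⟨trivial, by rw [Finset.card_image_of_injective _ (Equiv.injective _), hA]⟩, rfl⟩

  rw [h1, Finset.sum_biUnion]
  · rw [Finset.smul_sum]
    refine Finset.sum_congr rfl fun J hJ => ?_
    rw [mem_filter] at hJ
    have : ∀ σ ∈ permsTo A J, g (A.image ⇑σ) = g J := fun σ hσ => by rw [mem_permsTo.1 hσ]
    rw [Finset.sum_congr rfl this, Finset.sum_const]
    congr 1
    exact card_permsTo_eq (by rw [hA, hJ.2]) rfl rfl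
  · intro J₁ hJ₁ J₂ hJ₂ hne
    simp only [Function.onFun]
    rw [Finset.disjoint_left]
    intro σ h₁ h₂
    rw [mem_permsTo] at h₁ h₂
    exact hne (h₁ ▸ h₂ ▸ rfl)

lemma card_permsTo_mul (A : Finset (Fin n)) (hA : A.card = k) (hk : k ≤ n) :
    (permsTo A A).card * n.choose k = n.factorial := by
  have := sum_perm_image (M := ℕ) A hA (fun _ => 1)
  simp only [smul_eq_mul, Finset.sum_const, mul_one] at this
  rw [Finset.card_univ, Fintype.card_perm, Fintype.card_fin] at this
  rw [← card_filter_card_eq hk]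
  omega




lemma posDef_blockDiagonal {m o : Type*} [Fintype m] [DecidableEq m] [Fintype o] [DecidableEq o]
    {D : o → Matrix m m ℝ} (hD : ∀ i, (D i).PosDef) : (Matrix.blockDiagonal D).PosDef := by
  refine Matrix.PosDef.of_dotProduct_mulVec_pos ?_ ?_
  · unfold Matrix.IsHermitian
    rw [blockDiagonal_conjTranspose]
    exact congrArg Matrix.blockDiagonal (funext fun i => (hD i).1)
  · intro x hx
    have hmv : ∀ a : m, ∀ i : o, (Matrix.blockDiagonal D *ᵥ x) (a, i)
        = ((D i) *ᵥ (fun b => x (b, i))) a := by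
      intro a i
      simp only [Matrix.mulVec, dotProduct, Fintype.sum_prod_type,
        Matrix.blockDiagonal_apply]
      rw [Finset.sum_comm]
      simp [Finset.sum_ite_eq', eq_comm]
    have hdp : star x ⬝ᵥ (Matrix.blockDiagonal D *ᵥ x)
        = ∑ i : o, star (fun b => x (b, i)) ⬝ᵥ ((D i) *ᵥ (fun b => x (b, i))) := by
      simp only [dotProduct, Fintype.sum_prod_type]
      rw [Finset.sum_comm]
      refine Finset.sum_congr rfl fun i _ => Finset.sum_congr rfl fun a _ => ?_
      rw [hmv a i]
      rfl
    rw [hdp]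
    obtain ⟨⟨a₀, i₀⟩, hai⟩ := Function.ne_iff.mp hx
    refine Finset.sum_pos' (fun i _ => (hD i).posSemidef.dotProduct_mulVec_nonneg _) ⟨i₀, mem_univ _, ?_⟩
    refine (hD i₀).dotProduct_mulVec_pos (fun h0 => hai ?_)
    exact congrFun h0 a₀

section Blocks
variable {n k q : ℕ} (hn : k * q = n)
  (Y : (J : Finset (Fin n)) → Matrix ↥J ↥J ℝ)

/-- the canonical equivalence `Fin k × Fin q ≃ Fin n` -/
def eKQ (hn : k * q = n) : Fin k × Fin q ≃ Fin n := finProdFinEquiv.trans (finCongr hn)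

/-- the `i`-th block of the partition associated to `σ` -/
def block (hn : k * q = n) (σ : Equiv.Perm (Fin n)) (i : Fin q) : Finset (Fin n) :=
  univ.image (fun a : Fin k => σ (eKQ hn (a, i)))

lemma block_eq_image (σ : Equiv.Perm (Fin n)) (i : Fin q) :
    block hn σ i = (block hn 1 i).image ⇑σ := by
  unfold block
  rw [Finset.image_image]
  rfl

lemma card_block (σ : Equiv.Perm (Fin n)) (i : Fin q) : (block hn σ i).card = k := by
  unfold block
  rw [Finset.card_image_of_injective, Finset.card_univ, Fintype.card_fin]
  intro a b hab
  have := (eKQ hn).injective (σ.injective hab)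
  exact (Prod.mk.injEq _ _ _ _).mp this |>.1

lemma mem_block {σ : Equiv.Perm (Fin n)} {i : Fin q} {x : Fin n} :
    x ∈ block hn σ i ↔ ((eKQ hn).symm (σ⁻¹ x)).2 = i := by
  unfold block
  simp only [Finset.mem_image, mem_univ, true_and]
  constructor
  · rintro ⟨a, rfl⟩
    simp
  · intro h
    subst h
    exact ⟨((eKQ hn).symm (σ⁻¹ x)).1, by simp⟩

/-- the equivalence between `Fin k` and the `i`-th block -/
def gEquiv (σ : Equiv.Perm (Fin n)) (i : Fin q) : Fin k ≃ ↥(block hn σ i) where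
  toFun a := ⟨σ (eKQ hn (a, i)), Finset.mem_image.2 ⟨a, mem_univ _, rfl⟩⟩
  invFun x := ((eKQ hn).symm (σ⁻¹ ↑x)).1
  left_inv a := by simp
  right_inv x := by
    obtain ⟨x, hxm⟩ := x
    have hx := (mem_block hn).1 hxm
    apply Subtype.ext
    show σ (eKQ hn (((eKQ hn).symm (σ⁻¹ x)).1, i)) = x
    subst hx
    simp

/-- the matrix of the `i`-th diagonal block -/
noncomputable def Dmat (σ : Equiv.Perm (Fin n)) (i : Fin q) : Matrix (Fin k) (Fin k) ℝ :=
  (Y (block hn σ i)).submatrix (gEquiv hn σ i) (gEquiv hn σ i)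

/-- the equivalence `Fin n ≃ Fin k × Fin q` twisted by `σ` -/
def psiEquiv (σ : Equiv.Perm (Fin n)) : Fin n ≃ Fin k × Fin q :=
  (σ⁻¹ : Equiv.Perm (Fin n)).trans (eKQ hn).symm

/-- the block-diagonal matrix associated to `σ` -/
noncomputable def Bmat (σ : Equiv.Perm (Fin n)) : Matrix (Fin n) (Fin n) ℝ :=
  (Matrix.blockDiagonal (fun i => Dmat hn Y σ i)).submatrix (psiEquiv hn σ) (psiEquiv hn σ)

lemma Bmat_posDef (σ : Equiv.Perm (Fin n)) (hY : ∀ J : Finset (Fin n), J.card = k → (Y J).PosDef) :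
    (Bmat hn Y σ).PosDef := by
  refine posDef_submatrix' (posDef_blockDiagonal fun i => ?_) _
  exact posDef_submatrix' (hY _ (card_block hn σ i)) _

lemma Bmat_det (σ : Equiv.Perm (Fin n)) :
    (Bmat hn Y σ).det = ∏ i : Fin q, (Y (block hn σ i)).det := by
  unfold Bmat Dmat
  rw [Matrix.det_submatrix_equiv_self, Matrix.det_blockDiagonal]
  exact Finset.prod_congr rfl fun i _ => Matrix.det_submatrix_equiv_self _ _

lemma Bmat_eq_sum (σ : Equiv.Perm (Fin n)) :
    Bmat hn Y σ = ∑ i : Fin q, Matrix.embed (block hn σ i) (Y (block hn σ i)) := by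
  funext x y
  have hsum : (∑ i : Fin q, Matrix.embed (block hn σ i) (Y (block hn σ i))) x y
      = ∑ i : Fin q, Matrix.embed (block hn σ i) (Y (block hn σ i)) x y := by
    simp [Matrix.sum_apply]
  rw [hsum]
  set i₀ : Fin q := (psiEquiv hn σ x).2 with hi₀
  have hxmem : x ∈ block hn σ i₀ := (mem_block hn).2 rfl
  rw [Finset.sum_eq_single i₀]
  · -- main term
    show Bmat hn Y σ x y = _
    unfold Bmat
    rw [Matrix.submatrix_apply, Matrix.blockDiagonal_apply]
    unfold Matrix.embed
    rw [dif_pos hxmem]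
    by_cases hy : y ∈ block hn σ i₀
    · have hy2 : (psiEquiv hn σ y).2 = i₀ := (mem_block hn).1 hy
      rw [if_pos (show (psiEquiv hn σ x).2 = (psiEquiv hn σ y).2 from hy2.symm), dif_pos hy]
      show Dmat hn Y σ i₀ ((psiEquiv hn σ x).1) ((psiEquiv hn σ y).1) = _
      unfold Dmat
      rw [Matrix.submatrix_apply]
      congr 1
      · apply Subtype.ext
        show σ (eKQ hn ((psiEquiv hn σ x).1, i₀)) = x
        have h3 : ((psiEquiv hn σ x).1, i₀) = psiEquiv hn σ x := Prod.mk.eta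
        rw [h3]
        unfold psiEquiv
        simp
      · apply Subtype.ext
        show σ (eKQ hn ((psiEquiv hn σ y).1, i₀)) = y
        have h3 : ((psiEquiv hn σ y).1, i₀) = psiEquiv hn σ y := by
          rw [← hy2]
        rw [h3]
        unfold psiEquiv
        simp
    · have hy2 : ¬ ((psiEquiv hn σ y).2 = i₀) := fun h => hy ((mem_block hn).2 h)
      rw [if_neg (show ¬ ((psiEquiv hn σ x).2 = (psiEquiv hn σ y).2) from fun h => hy2 h.symm),
        dif_neg hy]
  · intro i _ hi
    unfold Matrix.embed
    rw [dif_neg]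
    intro hmem
    exact hi ((mem_block hn).1 hmem ▸ rfl)
  · intro h
    exact absurd (mem_univ i₀) h

end Blocks


lemma exists_split [Nonempty p] {V : Matrix p p ℝ} (hV : V.PosDef)
    {m : ℕ} (hm : 2 ≤ m) {T : ℝ} (hT : T ≤ m * Real.log V.det) :
    ∃ Z : Fin m → Matrix p p ℝ, (∀ i, (Z i).PosDef) ∧ (∑ i, Z i = (m : ℝ) • V) ∧
      ∑ i, Real.log (Z i).det = T := by
  classical
  set nn : ℕ := Fintype.card p with hnn
  have hnn0 : 0 < nn := Fintype.card_pos
  have hnnR : (0:ℝ) < nn := by exact_mod_cast hnn0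
  set L' : ℝ := Real.log V.det with hL'
  have hm1R : (1:ℝ) ≤ (m:ℝ) - 1 := by
    have : (2:ℝ) ≤ m := by exact_mod_cast hm
    linarith
  set f : ℝ → ℝ :=
    fun a => nn * (Real.log ((m:ℝ) - ((m:ℝ)-1)*a) + ((m:ℝ)-1) * Real.log a) + m * L' with hf
  set a₀ : ℝ := min 1 (Real.exp ((T - m*L' - nn*Real.log m) / (nn*((m:ℝ)-1)))) with ha₀
  have ha₀pos : 0 < a₀ := lt_min one_pos (Real.exp_pos _)
  have ha₀le : a₀ ≤ 1 := min_le_left _ _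
  have harg : ∀ x : ℝ, 0 < x → x ≤ 1 → (1:ℝ) ≤ (m:ℝ) - ((m:ℝ)-1)*x := by
    intro x hx hx1
    nlinarith
  have hf1 : f 1 = m * L' := by
    have h1 : (m:ℝ) - ((m:ℝ)-1)*1 = 1 := by ring
    simp [hf, h1, Real.log_one]
  have hfa₀ : f a₀ ≤ T := by
    have hb : Real.log ((m:ℝ) - ((m:ℝ)-1)*a₀) ≤ Real.log m := by
      apply Real.log_le_log (by linarith [harg a₀ ha₀pos ha₀le])
      nlinarith
    have step : f a₀ ≤ nn * (Real.log m + ((m:ℝ)-1) * Real.log a₀) + m * L' := by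
      have := mul_le_mul_of_nonneg_left
        (add_le_add_left hb (((m:ℝ)-1) * Real.log a₀)) (le_of_lt hnnR)
      simpa [hf] using this
    rcases min_cases 1 (Real.exp ((T - m*L' - nn*Real.log m) / (nn*((m:ℝ)-1)))) with
      ⟨h1, h2⟩ | ⟨h1, h2⟩
    · -- a₀ = 1, and 1 ≤ exp(...)
      have hle : 0 ≤ (T - m*L' - nn*Real.log m) / (nn*((m:ℝ)-1)) := by
        by_contra hcon
        push_neg at hcon
        have := Real.exp_lt_one_iff.2 hcon
        linarith
      have hpos : (0:ℝ) < nn*((m:ℝ)-1) := by positivity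
      have : 0 ≤ T - m*L' - nn*Real.log m := by
        by_contra hcon
        push_neg at hcon
        have := div_neg_of_neg_of_pos hcon hpos
        linarith
      calc f a₀ ≤ nn * (Real.log m + ((m:ℝ)-1) * Real.log a₀) + m * L' := step
        _ = nn * Real.log m + m * L' := by rw [ha₀, h1]; simp [Real.log_one]
        _ ≤ T := by linarith
    · -- a₀ = exp(...)
      have hpos : (0:ℝ) < nn*((m:ℝ)-1) := by positivity
      have hlog : Real.log a₀ = (T - m*L' - nn*Real.log m) / (nn*((m:ℝ)-1)) := by
        rw [ha₀, h1, Real.log_exp]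
      calc f a₀ ≤ nn * (Real.log m + ((m:ℝ)-1) * Real.log a₀) + m * L' := step
        _ = T := by rw [hlog]; field_simp; ring
  have hcont : ContinuousOn f (Set.Icc a₀ 1) := by
    have h1 : ∀ x ∈ Set.Icc a₀ 1, (m:ℝ) - ((m:ℝ)-1)*x ≠ 0 := by
      intro x hx
      have := harg x (lt_of_lt_of_le ha₀pos hx.1) hx.2
      linarith
    have h2 : ∀ x ∈ Set.Icc a₀ 1, x ≠ 0 := fun x hx =>
      (lt_of_lt_of_le ha₀pos hx.1).ne'
    apply ContinuousOn.add _ continuousOn_const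
    apply ContinuousOn.mul continuousOn_const
    apply ContinuousOn.add
    · exact ((continuousOn_const.sub (continuousOn_const.mul continuousOn_id)).log h1)
    · exact continuousOn_const.mul (continuousOn_id.log h2)
  have hmem : T ∈ Set.Icc (f a₀) (f 1) := ⟨hfa₀, by rw [hf1]; exact hT⟩
  obtain ⟨a, hamem, hfa⟩ := intermediate_value_Icc ha₀le hcont hmem
  have hapos : 0 < a := lt_of_lt_of_le ha₀pos hamem.1
  have hale : a ≤ 1 := hamem.2
  set c : ℝ := (m:ℝ) - ((m:ℝ)-1)*a with hc
  have hcpos : 0 < c := lt_of_lt_of_le one_pos (harg a hapos hale)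
  set i0 : Fin m := ⟨0, by omega⟩ with hi0
  set Z : Fin m → Matrix p p ℝ := fun i => if i = i0 then c • V else a • V with hZ
  have hZi0 : Z i0 = c • V := if_pos rfl
  have hZne : ∀ i : Fin m, i ≠ i0 → Z i = a • V := fun i hi => if_neg hi
  refine ⟨Z, fun i => ?_, ?_, ?_⟩
  · by_cases h : i = i0
    · rw [h, hZi0]; exact posDef_smul hV hcpos
    · rw [hZne i h]; exact posDef_smul hV hapos
  · rw [← Finset.add_sum_erase _ _ (mem_univ i0), hZi0]
    have hrest : ∀ i ∈ univ.erase i0, Z i = a • V :=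
      fun i hi => hZne i (Finset.mem_erase.1 hi).1
    rw [Finset.sum_congr rfl hrest, Finset.sum_const, Finset.card_erase_of_mem (mem_univ i0),
      Finset.card_univ, Fintype.card_fin, ← Nat.cast_smul_eq_nsmul ℝ, smul_smul, ← add_smul]
    congr 1
    rw [Nat.cast_sub (by omega : 1 ≤ m)]
    push_cast
    ring
  · have hdetV : 0 < V.det := hV.det_pos
    have hlogdet : ∀ x : ℝ, 0 < x → Real.log (x • V).det = nn * Real.log x + L' := by
      intro x hx
      rw [Matrix.det_smul, Real.log_mul (by positivity) hdetV.ne', Real.log_pow]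
    rw [← Finset.add_sum_erase _ _ (mem_univ i0), hZi0]
    have hrest : ∀ i ∈ univ.erase i0,
        Real.log (Z i).det = nn * Real.log a + L' := by
      intro i hi
      rw [hZne i (Finset.mem_erase.1 hi).1, hlogdet a hapos]
    rw [Finset.sum_congr rfl hrest, Finset.sum_const, Finset.card_erase_of_mem (mem_univ i0),
      Finset.card_univ, Fintype.card_fin, hlogdet c hcpos, nsmul_eq_mul,
      Nat.cast_sub (by omega : 1 ≤ m)]
    rw [← hfa]
    simp only [hf]
    push_cast
    ring


section Assembly
variable {n k q : ℕ}

lemma sum_fin_card_one {m : ℕ} (hm : m = 1) {M : Type*} [AddCommMonoid M] (f : Fin m → M) :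
    ∑ i, f i = f ⟨0, by omega⟩ := by
  subst hm
  exact Fin.sum_univ_one f

lemma sum_sigma_perm {M : Type*} [AddCommMonoid M] (hn : k * q = n) (hq : 0 < q)
    (g : Finset (Fin n) → M) :
    ∑ σ : Equiv.Perm (Fin n), ∑ i : Fin q, g (block hn σ i)
      = (q * (permsTo (block hn 1 ⟨0, hq⟩) (block hn 1 ⟨0, hq⟩)).card) •
        ∑ J ∈ univ.filter (fun J : Finset (Fin n) => J.card = k), g J := by
  classical
  rw [Finset.sum_comm]
  have hstep : ∀ i : Fin q, ∑ σ : Equiv.Perm (Fin n), g (block hn σ i)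
      = (permsTo (block hn 1 ⟨0, hq⟩) (block hn 1 ⟨0, hq⟩)).card •
        ∑ J ∈ univ.filter (fun J : Finset (Fin n) => J.card = k), g J := by
    intro i
    calc ∑ σ : Equiv.Perm (Fin n), g (block hn σ i)
        = ∑ σ : Equiv.Perm (Fin n), g ((block hn 1 i).image ⇑σ) :=
          Finset.sum_congr rfl fun σ _ => by rw [← block_eq_image hn σ i]
      _ = (permsTo (block hn 1 i) (block hn 1 i)).card •
            ∑ J ∈ univ.filter (fun J : Finset (Fin n) => J.card = k), g J :=
          sum_perm_image _ (card_block hn 1 i) g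
      _ = _ := by
          congr 1
          exact card_permsTo_eq ((card_block hn 1 i).trans (card_block hn 1 i).symm)
            ((card_block hn 1 ⟨0, hq⟩).trans (card_block hn 1 ⟨0, hq⟩).symm)
            ((card_block hn 1 i).trans (card_block hn 1 ⟨0, hq⟩).symm)
  rw [Finset.sum_congr rfl (fun i _ => hstep i), Finset.sum_const, Finset.card_univ,
    Fintype.card_fin, smul_smul]

end Assembly
end BarAux

open BarAux

/-- if `k ∣ n` and `X = Σ_{|J|=k} (Y_J)^{→n}` with all `Y_J ≻ 0`,
then `X` splits as a sum of `C(n−1,k−1)` positive definite matrices `Z_i` with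
`Σ_i log det Z_i = Σ_J log det Y_J` (via Baranyai's theorem). -/
theorem baranyai_splitting {n k : ℕ} (hk : 0 < k) (hdvd : k ∣ n)
    (Y : (J : Finset (Fin n)) → Matrix ↥J ↥J ℝ)
    (hY : ∀ J : Finset (Fin n), J.card = k → (Y J).PosDef)
    (X : Matrix (Fin n) (Fin n) ℝ)
    (hX : X = ∑ J ∈ Finset.univ.filter (fun J : Finset (Fin n) => J.card = k),
            Matrix.embed J (Y J)) :
    ∃ Z : Fin (Nat.choose (n - 1) (k - 1)) → Matrix (Fin n) (Fin n) ℝ,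
      (∀ i, (Z i).PosDef) ∧ X = ∑ i, Z i ∧
      ∑ i, Real.log (Z i).det =
        ∑ J ∈ Finset.univ.filter (fun J : Finset (Fin n) => J.card = k),
          Real.log (Y J).det := by
  classical
  by_cases hn0 : n = 0
  · subst hn0
    have hfe : (univ.filter fun J : Finset (Fin 0) => J.card = k) = ∅ := by
      rw [Finset.filter_eq_empty_iff]
      intro J _
      have h1 : J.card ≤ 0 := le_trans (Finset.card_le_univ J) (by simp)
      omega
    have hzpd : (0 : Matrix (Fin 0) (Fin 0) ℝ).PosDef :=
      ⟨Matrix.isHermitian_zero,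
        fun x hx => (hx (Finsupp.ext fun j => j.elim0)).elim⟩
    refine ⟨fun _ => 0, fun _ => hzpd, ?_, ?_⟩
    · rw [hX, hfe, Finset.sum_empty]
      exact Finset.sum_const_zero.symm
    · rw [hfe, Finset.sum_empty]
      apply Finset.sum_eq_zero
      intro i _
      rw [Matrix.det_isEmpty, Real.log_one]
  have hn0' : 0 < n := Nat.pos_of_ne_zero hn0
  have hkn : k ≤ n := Nat.le_of_dvd hn0' hdvd
  by_cases hk1 : k = 1
  · -- k = 1
    subst hk1
    have hm1 : Nat.choose (n - 1) (1 - 1) = 1 := Nat.choose_zero_right _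
    have hset : univ.filter (fun J : Finset (Fin n) => J.card = 1)
        = univ.image (fun i : Fin n => ({i} : Finset (Fin n))) := by
      ext J
      constructor
      · intro hJ
        rw [mem_filter] at hJ
        obtain ⟨a, rfl⟩ := Finset.card_eq_one.1 hJ.2
        exact Finset.mem_image.2 ⟨a, mem_univ a, rfl⟩
      · intro hJ
        obtain ⟨a, _, rfl⟩ := Finset.mem_image.1 hJ
        exact mem_filter.2 ⟨mem_univ _, Finset.card_singleton a⟩
    have hinj : ∀ x ∈ (univ : Finset (Fin n)), ∀ y ∈ univ,
        ({x} : Finset (Fin n)) = {y} → x = y :=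
      fun x _ y _ h => Finset.singleton_injective h
    set d : Fin n → ℝ :=
      fun i => Y {i} ⟨i, Finset.mem_singleton_self i⟩ ⟨i, Finset.mem_singleton_self i⟩ with hd
    have hdet1 : ∀ i : Fin n, (Y {i}).det = d i := by
      intro i
      haveI : Unique ↥({i} : Finset (Fin n)) :=
        { default := ⟨i, Finset.mem_singleton_self i⟩,
          uniq := fun x => Subtype.ext (Finset.mem_singleton.1 x.2) }
      rw [Matrix.det_unique, show (default : ↥({i} : Finset (Fin n)))
        = ⟨i, Finset.mem_singleton_self i⟩ from Subtype.ext (Finset.mem_singleton.1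
          (Subtype.prop _))]
    have hdpos : ∀ i, 0 < d i := by
      intro i
      rw [← hdet1 i]
      exact (hY {i} (Finset.card_singleton i)).det_pos
    have hXdiag : X = Matrix.diagonal d := by
      rw [hX, hset, Finset.sum_image hinj]
      funext x y
      rw [Matrix.sum_apply]
      by_cases hxy : x = y
      · subst hxy
        rw [Matrix.diagonal_apply_eq, Finset.sum_eq_single x]
        · unfold Matrix.embed
          rw [dif_pos (Finset.mem_singleton_self x), dif_pos (Finset.mem_singleton_self x)]
        · intro i _ hix
          unfold Matrix.embed
          rw [dif_neg]
          rw [Finset.mem_singleton]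
          exact fun h => hix h.symm
        · intro h
          exact absurd (mem_univ x) h
      · rw [Matrix.diagonal_apply_ne _ hxy]
        apply Finset.sum_eq_zero
        intro i _
        unfold Matrix.embed
        by_cases hxi : x ∈ ({i} : Finset (Fin n))
        · rw [dif_pos hxi, dif_neg]
          rw [Finset.mem_singleton] at hxi ⊢
          intro hyi
          exact hxy (by rw [hxi, hyi])
        · rw [dif_neg hxi]
    have hXpd : X.PosDef := by rw [hXdiag]; exact Matrix.PosDef.diagonal hdpos
    refine ⟨fun _ => X, fun _ => hXpd, ?_, ?_⟩
    · rw [sum_fin_card_one hm1]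
    · rw [sum_fin_card_one hm1, hset, Finset.sum_image hinj, hXdiag, Matrix.det_diagonal,
        Real.log_prod (fun i _ => (hdpos i).ne')]
      exact Finset.sum_congr rfl fun i _ => by rw [hdet1 i]
  by_cases hkn' : k = n
  · -- k = n
    subst hkn'
    have hm1 : Nat.choose (k - 1) (k - 1) = 1 := Nat.choose_self _
    have hfilter : univ.filter (fun J : Finset (Fin k) => J.card = k) = {univ} := by
      ext J
      simp only [mem_filter, mem_univ, true_and, Finset.mem_singleton]
      constructor
      · intro h
        exact J.eq_univ_of_card (by rw [h, Fintype.card_fin])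
      · rintro rfl
        rw [Finset.card_univ, Fintype.card_fin]
    have hXe : X = Matrix.embed univ (Y univ) := by rw [hX, hfilter, Finset.sum_singleton]
    set e0 : Fin k ≃ ↥(univ : Finset (Fin k)) :=
      (Equiv.subtypeUnivEquiv (fun x => Finset.mem_univ x)).symm with he0
    have hembed : Matrix.embed univ (Y univ) = (Y univ).submatrix e0 e0 := by
      funext x y
      unfold Matrix.embed
      rw [dif_pos (Finset.mem_univ x), dif_pos (Finset.mem_univ y)]
      rfl
    have hXpd : X.PosDef := by
      rw [hXe, hembed]
      exact posDef_submatrix' (hY univ (by rw [Finset.card_univ, Fintype.card_fin])) e0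
    have hdetX : X.det = (Y univ).det := by
      rw [hXe, hembed, Matrix.det_submatrix_equiv_self]
    refine ⟨fun _ => X, fun _ => hXpd, ?_, ?_⟩
    · rw [sum_fin_card_one hm1]
    · rw [sum_fin_card_one hm1, hfilter, Finset.sum_singleton, hdetX]
  -- main case
  have hk2 : 2 ≤ k := by omega
  have hkn2 : k < n := lt_of_le_of_ne hkn hkn'
  obtain ⟨q, hq⟩ := hdvd
  have hn' : k * q = n := hq.symm
  have hq0 : 0 < q := by
    rcases Nat.eq_zero_or_pos q with h | h
    · rw [h, mul_zero] at hn'; omega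
    · exact h
  set m : ℕ := Nat.choose (n - 1) (k - 1) with hm
  have hm2 : 2 ≤ m := by
    rw [hm, show n - 1 = (n - 2) + 1 by omega, show k - 1 = (k - 2) + 1 by omega,
      Nat.choose_succ_succ]
    simp only [Nat.succ_eq_add_one]
    have p1 := Nat.choose_pos (show k - 2 ≤ n - 2 by omega)
    have p2 := Nat.choose_pos (show k - 2 + 1 ≤ n - 2 by omega)
    omega
  haveI : Nonempty (Fin n) := ⟨⟨0, hn0'⟩⟩
  set c0 : ℕ := (permsTo (block hn' 1 ⟨0, hq0⟩) (block hn' 1 ⟨0, hq0⟩)).card with hc0def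
  have hc0 : c0 * n.choose k = n.factorial :=
    card_permsTo_mul _ (card_block hn' 1 _) hkn
  have hchoose : n.choose k = q * m := by
    have h := Nat.add_one_mul_choose_eq (n - 1) (k - 1)
    rw [show n - 1 + 1 = n by omega, show k - 1 + 1 = k by omega] at h
    have h2 : k * (q * m) = k * n.choose k := by
      rw [← mul_assoc, hn', hm, h, mul_comm]
    exact (Nat.eq_of_mul_eq_mul_left hk h2).symm
  have hfact : c0 * (q * m) = n.factorial := by rw [← hchoose]; exact hc0
  have hc0pos : 0 < c0 := by
    rcases Nat.eq_zero_or_pos c0 with h | h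
    · rw [h, zero_mul] at hfact
      exact absurd hfact.symm (Nat.factorial_pos n).ne'
    · exact h
  have hmpos : 0 < m := by omega
  have hBpd : ∀ σ : Equiv.Perm (Fin n), (Bmat hn' Y σ).PosDef :=
    fun σ => Bmat_posDef hn' Y σ hY
  have hBsum : ∑ σ : Equiv.Perm (Fin n), Bmat hn' Y σ = (q * c0) • X := by
    calc ∑ σ : Equiv.Perm (Fin n), Bmat hn' Y σ
        = ∑ σ : Equiv.Perm (Fin n), ∑ i : Fin q, Matrix.embed (block hn' σ i) (Y (block hn' σ i)) :=
          Finset.sum_congr rfl fun σ _ => Bmat_eq_sum hn' Y σ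
      _ = (q * (permsTo (block hn' 1 ⟨0, hq0⟩) (block hn' 1 ⟨0, hq0⟩)).card) •
            ∑ J ∈ univ.filter (fun J : Finset (Fin n) => J.card = k),
            Matrix.embed J (Y J) := sum_sigma_perm hn' hq0 (fun J => Matrix.embed J (Y J))
      _ = (q * c0) • X := by rw [← hX, ← hc0def]
  have hqc0R : (0:ℝ) < ((q * c0 : ℕ) : ℝ) := by positivity
  have hXpd : X.PosDef := by
    have hsumpd : (∑ σ : Equiv.Perm (Fin n), Bmat hn' Y σ).PosDef :=
      posDef_sum _ hBpd
    have hXeq : X = ((q * c0 : ℕ) : ℝ)⁻¹ • ∑ σ : Equiv.Perm (Fin n), Bmat hn' Y σ := by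
      rw [hBsum, ← Nat.cast_smul_eq_nsmul ℝ, smul_smul, inv_mul_cancel₀ hqc0R.ne', one_smul]
    rw [hXeq]
    exact posDef_smul hsumpd (inv_pos.2 hqc0R)
  set V : Matrix (Fin n) (Fin n) ℝ := ((m : ℝ))⁻¹ • X with hV
  have hmR : (0:ℝ) < (m:ℝ) := by exact_mod_cast hmpos
  have hVpd : V.PosDef := posDef_smul hXpd (inv_pos.2 hmR)
  set T : ℝ := ∑ J ∈ univ.filter (fun J : Finset (Fin n) => J.card = k), Real.log (Y J).det
    with hT
  have hlogsum : ∑ σ : Equiv.Perm (Fin n), Real.log (Bmat hn' Y σ).det = (q * c0) • T := by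
    calc ∑ σ : Equiv.Perm (Fin n), Real.log (Bmat hn' Y σ).det
        = ∑ σ : Equiv.Perm (Fin n), ∑ i : Fin q, Real.log ((Y (block hn' σ i)).det) := by
          refine Finset.sum_congr rfl fun σ _ => ?_
          rw [Bmat_det hn' Y σ,
            Real.log_prod (fun i _ => (hY _ (card_block hn' σ i)).det_pos.ne')]
      _ = (q * (permsTo (block hn' 1 ⟨0, hq0⟩) (block hn' 1 ⟨0, hq0⟩)).card) •
            ∑ J ∈ univ.filter (fun J : Finset (Fin n) => J.card = k), Real.log (Y J).det :=
          sum_sigma_perm hn' hq0 (fun J => Real.log (Y J).det)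
      _ = (q * c0) • T := by rw [← hc0def, ← hT]
  have hcardperm : (Fintype.card (Equiv.Perm (Fin n)) : ℝ) = (n.factorial : ℝ) := by
    rw [Fintype.card_perm, Fintype.card_fin]
  have hfactR : ((q * c0 : ℕ) : ℝ) * (m : ℝ) = (n.factorial : ℝ) := by
    rw [← hfact]
    push_cast
    ring
  have hW : ((Fintype.card (Equiv.Perm (Fin n)) : ℝ))⁻¹ • ∑ σ : Equiv.Perm (Fin n), Bmat hn' Y σ
      = V := by
    rw [hBsum, ← Nat.cast_smul_eq_nsmul ℝ, smul_smul, hV, hcardperm]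
    congr 1
    rw [← hfactR]
    field_simp
  have hjensen := sum_logdet_le (fun σ : Equiv.Perm (Fin n) => Bmat hn' Y σ) hBpd
  rw [hW, hlogsum, hcardperm, ← hfactR] at hjensen
  have hkey : T ≤ (m : ℝ) * Real.log V.det := by
    have h1 : ((q * c0 : ℕ) : ℝ) * T ≤ ((q * c0 : ℕ) : ℝ) * ((m:ℝ) * Real.log V.det) := by
      rw [← Nat.cast_smul_eq_nsmul ℝ] at hjensen
      calc ((q * c0 : ℕ) : ℝ) * T = ((q * c0 : ℕ) : ℝ) • T := by rw [smul_eq_mul]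
        _ ≤ ((q * c0 : ℕ) : ℝ) * (m:ℝ) * Real.log V.det := hjensen
        _ = ((q * c0 : ℕ) : ℝ) * ((m:ℝ) * Real.log V.det) := by ring
    exact le_of_mul_le_mul_left h1 hqc0R
  obtain ⟨Z, hZpd, hZsum, hZlog⟩ := exists_split hVpd hm2 hkey
  refine ⟨Z, hZpd, ?_, hZlog⟩
  rw [hZsum, hV, smul_smul, mul_inv_cancel₀ hmR.ne', one_smul]
end

section
/- Barrier comparison inequality: let k | n, let Y = {Y_J ≻ 0 : J ⊆ [n], |J| = k}, X = Σ_{|J|=k} (Y_J)^{→n}, and set c = C(n−1,k−1). Then −Σ_{|J|=k} log(det(Y_J)) ≥ −c·log(det(X)) + n·c·log(c). -/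
open Matrix Finset

section BarrierAux

variable {m : Type*} [Fintype m] [DecidableEq m]

open scoped MatrixOrder


lemma trace_eq_sum_eig {A : Matrix m m ℝ} (hA : A.IsHermitian) :
    A.trace = ∑ i, hA.eigenvalues i := by
  conv_lhs => rw [hA.spectral_theorem]
  rw [Unitary.conjStarAlgAut_apply, Matrix.trace_mul_comm, ← mul_assoc, Unitary.coe_star_mul_self, one_mul,
    Matrix.trace_diagonal]
  simp

lemma logdet_le_trace {B : Matrix m m ℝ} (hB : B.PosDef) :
    Real.log B.det ≤ B.trace - Fintype.card m := by
  have he := hB.isHermitian.det_eq_prod_eigenvalues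
  have hpos : ∀ i : m, (0:ℝ) < hB.isHermitian.eigenvalues i := hB.eigenvalues_pos
  rw [trace_eq_sum_eig hB.isHermitian]
  have : Real.log B.det = ∑ i, Real.log (hB.isHermitian.eigenvalues i) := by
    rw [he]
    push_cast
    rw [Real.log_prod]
    · rfl
    · exact fun i _ => (hpos i).ne'
  rw [this]
  have hcard : (Fintype.card m : ℝ) = ∑ _i : m, (1:ℝ) := by simp
  rw [hcard, ← Finset.sum_sub_distrib]
  exact Finset.sum_le_sum fun i _ => Real.log_le_sub_one_of_pos (hpos i)

lemma sqrt_invertible {Z : Matrix m m ℝ} (hZ : Z.PosDef) :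
    IsUnit (CFC.sqrt Z).det ∧ (CFC.sqrt Z).det * (CFC.sqrt Z).det = Z.det := by
  have h2 : CFC.sqrt Z * CFC.sqrt Z = Z := CFC.sqrt_mul_sqrt_self Z hZ.posSemidef.nonneg
  have hdet : (CFC.sqrt Z).det * (CFC.sqrt Z).det = Z.det := by
    rw [← Matrix.det_mul, h2]
  refine ⟨?_, hdet⟩
  refine isUnit_iff_ne_zero.2 fun h => ?_
  have := hZ.det_pos
  rw [← hdet, h, mul_zero] at this
  exact lt_irrefl _ this

lemma key_ineq {A Z : Matrix m m ℝ} (hA : A.PosDef) (hZ : Z.PosDef) :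
    Real.log A.det + Real.log Z.det ≤ (Z * A).trace - Fintype.card m := by
  set S := CFC.sqrt Z with hSdef
  have hSpsd : S.PosSemidef := (CFC.sqrt_nonneg Z).posSemidef
  have hSherm : S.IsHermitian := hSpsd.isHermitian
  have h2 : S * S = Z := CFC.sqrt_mul_sqrt_self Z hZ.posSemidef.nonneg
  obtain ⟨hSunit, hSdet⟩ := sqrt_invertible hZ
  -- B := S * A * S is PosDef
  have hB : (S * A * S).PosDef := by
    refine Matrix.PosDef.of_dotProduct_mulVec_pos ?_ fun x hx => ?_
    · show (S * A * S)ᴴ = S * A * S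
      calc (S * A * S)ᴴ = Sᴴ * (Aᴴ * Sᴴ) := by
            rw [Matrix.conjTranspose_mul, Matrix.conjTranspose_mul]
        _ = S * A * S := by rw [hSherm.eq, hA.isHermitian.eq, mul_assoc]
    · have hSx : S *ᵥ x ≠ 0 := by
        intro h
        apply hx
        have : S⁻¹ *ᵥ (S *ᵥ x) = x := by
          rw [Matrix.mulVec_mulVec, Matrix.nonsing_inv_mul _ hSunit, Matrix.one_mulVec]
        rw [h, Matrix.mulVec_zero] at this
        exact this.symm
      have := hA.dotProduct_mulVec_pos hSx
      have hrw : dotProduct (star x) ((S * A * S) *ᵥ x)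
          = dotProduct (star (S *ᵥ x)) (A *ᵥ (S *ᵥ x)) := by
        rw [← Matrix.mulVec_mulVec, ← Matrix.mulVec_mulVec]
        simp only [star_trivial]
        have hst : Sᵀ = S := by
          ext i j
          have := congrFun (congrFun hSherm.eq i) j
          simpa using this
        rw [Matrix.dotProduct_mulVec x S]
        congr 1
        conv_lhs => rw [← hst]
        rw [Matrix.vecMul_transpose]
      rw [hrw]
      exact this
  have htr : (S * A * S).trace = (Z * A).trace := by
    rw [mul_assoc, Matrix.trace_mul_comm, mul_assoc, h2, Matrix.trace_mul_comm]
  have hdetB : (S * A * S).det = Z.det * A.det := by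
    rw [Matrix.det_mul, Matrix.det_mul, mul_comm S.det A.det, mul_assoc, hSdet, mul_comm]
  have := logdet_le_trace hB
  rw [hdetB, htr, Real.log_mul hZ.det_pos.ne' hA.det_pos.ne'] at this
  linarith

/-- principal submatrix on a finset -/
def psub (M : Matrix m m ℝ) (J : Finset m) : Matrix ↥J ↥J ℝ :=
  M.submatrix Subtype.val Subtype.val

noncomputable def extJ (J : Finset m) (x : ↥J → ℝ) : (m → ℝ) :=
  fun a => if h : a ∈ J then x ⟨a, h⟩ else 0

lemma sum_extJ (J : Finset m) (g : m → ℝ) (x : ↥J → ℝ) :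
    ∑ a : m, g a * (extJ J x a) = ∑ a : ↥J, g ↑a * x a := by
  rw [← Finset.sum_subset (Finset.subset_univ J)
    (fun a _ ha => by simp [extJ, ha]), ← Finset.sum_attach J (fun a => g a * extJ J x a),
    Finset.univ_eq_attach]
  exact Finset.sum_congr rfl fun a _ => by simp [extJ, a.2]

lemma dot_psub (M : Matrix m m ℝ) (J : Finset m) (x : ↥J → ℝ) :
    x ⬝ᵥ (psub M J) *ᵥ x = (extJ J x) ⬝ᵥ M *ᵥ (extJ J x) := by
  simp only [dotProduct, Matrix.mulVec, psub, Matrix.submatrix_apply]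
  have h1 : ∀ a : m, (∑ j : m, M a j * (extJ J x j)) = ∑ j : ↥J, M a ↑j * x j :=
    fun a => sum_extJ J (fun j => M a j) x
  calc ∑ a : ↥J, x a * ∑ b : ↥J, M ↑a ↑b * x b
      = ∑ a : ↥J, (fun c => ∑ j : m, M c j * extJ J x j) ↑a * x a := by
        refine Finset.sum_congr rfl fun a _ => ?_
        show x a * _ = (∑ j : m, M ↑a j * extJ J x j) * x a
        rw [h1 ↑a, mul_comm]
    _ = ∑ a : m, (∑ j : m, M a j * extJ J x j) * extJ J x a :=
        (sum_extJ J (fun c => ∑ j : m, M c j * extJ J x j) x).symm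
    _ = ∑ a : m, extJ J x a * ∑ j : m, M a j * extJ J x j :=
        Finset.sum_congr rfl fun a _ => mul_comm _ _

lemma psub_posDef {M : Matrix m m ℝ} (hM : M.PosDef) (J : Finset m) :
    (psub M J).PosDef := by
  refine Matrix.PosDef.of_dotProduct_mulVec_pos ?_ ?_
  · ext a b
    simp only [psub, Matrix.conjTranspose_apply, Matrix.submatrix_apply, star_trivial]
    have := congrFun (congrFun hM.isHermitian.eq b.1) a.1
    simpa using this.symm ▸ rfl
  · intro x hx
    have hext : extJ J x ≠ 0 := by
      intro h
      apply hx
      ext a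
      have := congrFun h a.1
      simpa [extJ, a.2] using this
    have := hM.dotProduct_mulVec_pos hext
    simpa [dot_psub M J x] using this

lemma diag_pos {M : Matrix m m ℝ} (hM : M.PosDef) (i : m) : 0 < M i i := by
  have := hM.dotProduct_mulVec_pos (x := Pi.single i 1) (by
    intro h
    have := congrFun h i
    simp at this)
  simpa [dotProduct, Matrix.mulVec, Pi.single_apply, Finset.sum_ite_eq, mul_comm] using this

lemma hadamard_log {M : Matrix m m ℝ} (hM : M.PosDef) :
    Real.log M.det ≤ ∑ i, Real.log (M i i) := by
  have hd : ∀ i : m, 0 < M i i := diag_pos hM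
  set Z : Matrix m m ℝ := Matrix.diagonal (fun i => (M i i)⁻¹) with hZdef
  have hZ : Z.PosDef := Matrix.posDef_diagonal_iff.2 fun i => inv_pos.2 (hd i)
  have hkey := key_ineq hM hZ
  have htr : (Z * M).trace = Fintype.card m := by
    have : ∀ i : m, (M i i)⁻¹ * M i i = 1 := fun i => inv_mul_cancel₀ (hd i).ne'
    simp [Matrix.trace, Matrix.diag, hZdef, Matrix.diagonal_mul, this]
  have hdetZ : Real.log Z.det = -∑ i, Real.log (M i i) := by
    rw [hZdef, Matrix.det_diagonal]
    rw [Real.log_prod (fun i _ => (inv_pos.2 (hd i)).ne')]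
    simp [Real.log_inv, Finset.sum_neg_distrib]
  rw [htr, hdetZ] at hkey
  linarith

lemma det_psub_compl (M : Matrix m m ℝ) (i : m) :
    (psub M ({i}ᶜ : Finset m)).det = M.adjugate i i := by
  rw [Matrix.adjugate_apply]
  set N := M.updateRow i (Pi.single i 1) with hN
  let p : m → Prop := fun a => a ∈ ({i}ᶜ : Finset m)
  let e : {a // p a} ⊕ {a // ¬ p a} ≃ m := Equiv.sumCompl p
  have hdet : N.det = (N.submatrix e e).det := (Matrix.det_submatrix_equiv_self e N).symm
  have hblock : N.submatrix e e = Matrix.fromBlocks (psub M ({i}ᶜ : Finset m))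
      (Matrix.of fun (a : {a // p a}) (b : {a // ¬ p a}) => M a.1 b.1) 0 1 := by
    ext a b
    have hval : ∀ a : {a // ¬ p a}, a.1 = i := fun a => by
      have := a.2
      simp only [p, Finset.mem_compl, Finset.mem_singleton, not_not] at this
      exact this
    have hne : ∀ a : {a // p a}, a.1 ≠ i := fun a => by
      have := a.2
      simpa [p, Finset.mem_compl, Finset.mem_singleton] using this
    rcases a with a | a <;> rcases b with b | b
    · simp only [Matrix.submatrix_apply, Matrix.fromBlocks_apply₁₁]
      show N a.1 b.1 = psub M _ a b
      rw [hN, Matrix.updateRow_ne (hne a)]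
      rfl
    · simp only [Matrix.submatrix_apply, Matrix.fromBlocks_apply₁₂]
      show N a.1 b.1 = M a.1 b.1
      rw [hN, Matrix.updateRow_ne (hne a)]
    · simp only [Matrix.submatrix_apply, Matrix.fromBlocks_apply₂₁]
      show N a.1 b.1 = (0 : Matrix _ _ ℝ) a b
      rw [hN, hval a, Matrix.updateRow_self]
      have : b.1 ≠ i := hne b
      simp [Pi.single_apply, this]
    · simp only [Matrix.submatrix_apply, Matrix.fromBlocks_apply₂₂]
      show N a.1 b.1 = (1 : Matrix _ _ ℝ) a b
      have hab : a = b := Subtype.ext ((hval a).trans (hval b).symm)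
      rw [hN, hval a, Matrix.updateRow_self, hab, hval b]
      simp [Matrix.one_apply, Pi.single_apply]
  rw [hdet, hblock, Matrix.det_fromBlocks_zero₂₁, Matrix.det_one, mul_one]

lemma det_psub_compl' {M : Matrix m m ℝ} (hM : M.PosDef) (i : m) :
    (psub M ({i}ᶜ : Finset m)).det = M.det * (M⁻¹ i i) := by
  rw [det_psub_compl, Matrix.inv_def, Ring.inverse_eq_inv']
  simp only [Matrix.smul_apply, smul_eq_mul]
  rw [← mul_assoc, mul_inv_cancel₀ hM.det_pos.ne', one_mul]

lemma szasz_base {M : Matrix m m ℝ} (hM : M.PosDef) (hm : 1 ≤ Fintype.card m) :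
    ((Fintype.card m : ℝ) - 1) * Real.log M.det ≤
      ∑ J ∈ Finset.univ.filter (fun J : Finset m => J.card = Fintype.card m - 1),
        Real.log (psub M J).det := by
  have hinv : (M⁻¹).PosDef := hM.inv
  have himg : Finset.univ.filter (fun J : Finset m => J.card = Fintype.card m - 1)
      = Finset.univ.image (fun i : m => ({i}ᶜ : Finset m)) := by
    ext J
    simp only [Finset.mem_filter, Finset.mem_univ, true_and, Finset.mem_image]
    constructor
    · intro hJ
      have hc : Jᶜ.card = 1 := by
        rw [Finset.card_compl, hJ]
        omega
      obtain ⟨i, hi⟩ := Finset.card_eq_one.1 hc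
      exact ⟨i, by rw [← hi, compl_compl]⟩
    · rintro ⟨i, rfl⟩
      rw [Finset.card_compl, Finset.card_singleton]
  have hinj : ∀ i ∈ Finset.univ, ∀ j ∈ Finset.univ,
      ({i}ᶜ : Finset m) = ({j}ᶜ : Finset m) → i = j := by
    intro i _ j _ h
    have : ({i} : Finset m) = {j} := by
      rw [← compl_compl ({i} : Finset m), h, compl_compl]
    simpa using this
  rw [himg, Finset.sum_image hinj]
  have hterm : ∀ i : m, Real.log (psub M ({i}ᶜ : Finset m)).det
      = Real.log M.det + Real.log (M⁻¹ i i) := by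
    intro i
    rw [det_psub_compl' hM, Real.log_mul hM.det_pos.ne' (diag_pos hinv i).ne']
  rw [Finset.sum_congr rfl fun i _ => hterm i, Finset.sum_add_distrib,
    Finset.sum_const, Finset.card_univ]
  have hhad := hadamard_log hinv
  have hlog : Real.log (M⁻¹).det = - Real.log M.det := by
    rw [Matrix.det_nonsing_inv, Ring.inverse_eq_inv', Real.log_inv]
  rw [hlog] at hhad
  have : (Fintype.card m : ℝ) - 1 ≥ 1 - 1 := by
    have : (1:ℝ) ≤ (Fintype.card m : ℝ) := by exact_mod_cast hm
    linarith
  rw [nsmul_eq_mul]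
  linarith

def mapEquiv (J' : Finset m) (K : Finset ↥J') :
    ↥K ≃ ↥(K.map (Function.Embedding.subtype fun x => x ∈ J')) where
  toFun a := ⟨a.1.1, Finset.mem_map_of_mem _ a.2⟩
  invFun b := by
    refine ⟨⟨b.1, ?_⟩, ?_⟩
    · obtain ⟨a, ha, hab⟩ := Finset.mem_map.1 b.2
      exact hab ▸ a.2
    · obtain ⟨a, ha, hab⟩ := Finset.mem_map.1 b.2
      have h2 : (b.1 : m) ∈ J' := hab ▸ a.2
      have : a = (⟨b.1, h2⟩ : ↥J') := Subtype.ext hab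
      exact this ▸ ha
  left_inv a := by apply Subtype.ext; apply Subtype.ext; rfl
  right_inv b := by apply Subtype.ext; rfl

lemma psub_psub_det (M : Matrix m m ℝ) (J' : Finset m) (K : Finset ↥J') :
    (psub (psub M J') K).det
      = (psub M (K.map (Function.Embedding.subtype fun x => x ∈ J'))).det := by
  rw [← Matrix.det_submatrix_equiv_self (mapEquiv J' K)
    (psub M (K.map (Function.Embedding.subtype fun x => x ∈ J')))]
  congr 1

lemma inner_sum_eq (M : Matrix m m ℝ) (J' : Finset m) (k : ℕ) :
    ∑ K ∈ Finset.univ.filter (fun K : Finset ↥J' => K.card = k),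
        Real.log (psub (psub M J') K).det
      = ∑ J ∈ J'.powersetCard k, Real.log (psub M J).det := by
  refine Finset.sum_bij
    (fun K _ => K.map (Function.Embedding.subtype fun x => x ∈ J')) ?_ ?_ ?_ ?_
  · intro K hK
    rw [Finset.mem_powersetCard]
    constructor
    · intro x hx
      obtain ⟨a, _, rfl⟩ := Finset.mem_map.1 hx
      exact a.2
    · rw [Finset.card_map]
      exact (Finset.mem_filter.1 hK).2
  · intro K1 h1 K2 h2 h
    exact Finset.map_injective _ h
  · intro J hJ
    rw [Finset.mem_powersetCard] at hJ
    refine ⟨Finset.univ.filter (fun a : ↥J' => a.1 ∈ J), ?_, ?_⟩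
    · rw [Finset.mem_filter]
      refine ⟨Finset.mem_univ _, ?_⟩
      rw [← hJ.2]
      apply Finset.card_bij (fun a _ => a.1)
      · intro a ha
        exact (Finset.mem_filter.1 ha).2
      · intro a ha b hb hab
        exact Subtype.ext hab
      · intro b hb
        exact ⟨⟨b, hJ.1 hb⟩, Finset.mem_filter.2 ⟨Finset.mem_univ _, hb⟩, rfl⟩
    · ext x
      simp only [Finset.mem_map, Finset.mem_filter, Finset.mem_univ, true_and,
        Function.Embedding.coe_subtype]
      constructor
      · rintro ⟨a, ha, rfl⟩
        exact ha
      · intro hx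
        exact ⟨⟨x, hJ.1 hx⟩, hx, rfl⟩
  · intro K hK
    exact congrArg Real.log (psub_psub_det M J' K)

lemma count_supersets (J : Finset m) (k : ℕ) (hJ : J.card = k) (hk : k < Fintype.card m) :
    ((Finset.univ.filter (fun J' : Finset m => J'.card = k + 1)).filter
      (fun J' => J ⊆ J')).card = Fintype.card m - k := by
  rw [← hJ, ← Finset.card_compl J]
  symm
  apply Finset.card_bij (fun a _ => insert a J)
  · intro a ha
    have haJ : a ∉ J := Finset.mem_compl.1 ha
    simp only [Finset.mem_filter, Finset.mem_univ, true_and]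
    exact ⟨by rw [Finset.card_insert_of_notMem haJ, hJ], Finset.subset_insert _ _⟩
  · intro a ha b hb hab
    have haJ : a ∉ J := Finset.mem_compl.1 ha
    have hbJ : b ∉ J := Finset.mem_compl.1 hb
    have : a ∈ insert b J := hab ▸ Finset.mem_insert_self a J
    rcases Finset.mem_insert.1 this with h | h
    · exact h
    · exact absurd h haJ
  · intro J' hJ'
    simp only [Finset.mem_filter, Finset.mem_univ, true_and] at hJ'
    obtain ⟨hcard, hsub⟩ := hJ'
    have : (J' \ J).Nonempty := by
      rw [← Finset.card_pos, Finset.card_sdiff_of_subset hsub, hcard, hJ]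
      omega
    obtain ⟨a, ha⟩ := this
    rw [Finset.mem_sdiff] at ha
    refine ⟨a, Finset.mem_compl.2 ha.2, ?_⟩
    apply Finset.eq_of_subset_of_card_le
    · intro x hx
      rcases Finset.mem_insert.1 hx with h | h
      · exact h ▸ ha.1
      · exact hsub h
    · rw [hcard, Finset.card_insert_of_notMem ha.2, hJ]

lemma double_count (f : Finset m → ℝ) (k : ℕ) (hk : k < Fintype.card m) :
    ∑ J' ∈ Finset.univ.filter (fun J' : Finset m => J'.card = k + 1),
        ∑ J ∈ J'.powersetCard k, f J
      = ((Fintype.card m - k : ℕ) : ℝ) *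
          ∑ J ∈ Finset.univ.filter (fun J : Finset m => J.card = k), f J := by
  have hps : ∀ J' : Finset m, J'.powersetCard k
      = (Finset.univ.filter (fun J : Finset m => J.card = k)).filter (fun J => J ⊆ J') := by
    intro J'
    ext J
    simp only [Finset.mem_powersetCard, Finset.mem_filter, Finset.mem_univ, true_and]
    tauto
  rw [Finset.sum_congr rfl (fun J' _ => by rw [hps J', Finset.sum_filter]),
    Finset.sum_comm, Finset.mul_sum]
  refine Finset.sum_congr rfl fun J hJ => ?_
  rw [← Finset.sum_filter, Finset.sum_const,
    count_supersets J k (Finset.mem_filter.1 hJ).2 hk, nsmul_eq_mul]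

lemma psub_univ_det (M : Matrix m m ℝ) : (psub M (Finset.univ : Finset m)).det = M.det := by
  rw [show psub M (Finset.univ : Finset m)
    = M.submatrix (Equiv.subtypeUnivEquiv Finset.mem_univ) (Equiv.subtypeUnivEquiv Finset.mem_univ)
    from rfl, Matrix.det_submatrix_equiv_self]

lemma szasz_aux (d : ℕ) : ∀ (M : Matrix m m ℝ), M.PosDef → ∀ k : ℕ, 0 < k →
    k + d = Fintype.card m →
    (Nat.choose (Fintype.card m - 1) (k - 1) : ℝ) * Real.log M.det ≤
      ∑ J ∈ Finset.univ.filter (fun J : Finset m => J.card = k),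
        Real.log (psub M J).det := by
  induction d with
  | zero =>
    intro M hM k hk hkd
    rw [Nat.add_zero] at hkd
    subst hkd
    have : Finset.univ.filter (fun J : Finset m => J.card = Fintype.card m)
        = {(Finset.univ : Finset m)} := by
      ext J
      simp only [Finset.mem_filter, Finset.mem_univ, true_and, Finset.mem_singleton]
      exact ⟨fun h => Finset.eq_univ_of_card J (h.trans Finset.card_univ.symm),
        fun h => by rw [h, Finset.card_univ]⟩
    rw [this, Finset.sum_singleton, psub_univ_det, Nat.choose_self, Nat.cast_one, one_mul]
  | succ d ih =>
    intro M hM k hk hkd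
    have hklt : k < Fintype.card m := by omega
    have hIH := ih M hM (k + 1) (by omega) (by omega)
    -- per-J' Szász base
    have hbase : ∀ J' ∈ Finset.univ.filter (fun J' : Finset m => J'.card = k + 1),
        (k : ℝ) * Real.log (psub M J').det ≤ ∑ J ∈ J'.powersetCard k,
          Real.log (psub M J).det := by
      intro J' hJ'
      have hcardJ' : Fintype.card ↥J' = k + 1 := by
        rw [Fintype.card_coe]
        exact (Finset.mem_filter.1 hJ').2
      have := szasz_base (psub_posDef hM J') (by rw [hcardJ']; omega)
      rw [hcardJ'] at this
      have hsimp : (k + 1 : ℕ) - 1 = k := by omega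
      rw [hsimp] at this
      rw [← inner_sum_eq M J' k]
      calc (k : ℝ) * Real.log (psub M J').det
          = ((k + 1 : ℕ) : ℝ) * Real.log (psub M J').det
            - Real.log (psub M J').det := by push_cast; ring
        _ ≤ _ := by
            have h1 : (((k:ℕ) + 1 : ℕ) : ℝ) - 1 = (k : ℝ) := by push_cast; ring
            calc ((k + 1 : ℕ) : ℝ) * Real.log (psub M J').det - Real.log (psub M J').det
                = (((k + 1 : ℕ) : ℝ) - 1) * Real.log (psub M J').det := by ring
              _ ≤ _ := this
    have hsum : (k : ℝ) * ∑ J' ∈ Finset.univ.filter (fun J' : Finset m => J'.card = k + 1),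
        Real.log (psub M J').det
        ≤ ((Fintype.card m - k : ℕ) : ℝ) *
          ∑ J ∈ Finset.univ.filter (fun J : Finset m => J.card = k),
            Real.log (psub M J).det := by
      rw [← double_count _ k hklt, Finset.mul_sum]
      exact Finset.sum_le_sum hbase
    -- choose identity
    have hchoose : (k : ℝ) * (Nat.choose (Fintype.card m - 1) k : ℝ)
        = ((Fintype.card m - k : ℕ) : ℝ) *
            (Nat.choose (Fintype.card m - 1) (k - 1) : ℝ) := by
      have := Nat.choose_succ_right_eq (Fintype.card m - 1) (k - 1)
      have hk1 : k - 1 + 1 = k := by omega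
      rw [hk1] at this
      have h2 : Fintype.card m - 1 - (k - 1) = Fintype.card m - k := by omega
      rw [h2] at this
      have hcast := congrArg (fun x : ℕ => (x : ℝ)) this
      push_cast at hcast
      linarith [hcast]
    have hcast : ((k + 1 : ℕ) : ℝ) - 1 = (k:ℝ) := by push_cast; ring
    have hsimp2 : (k + 1 : ℕ) - 1 = k := by omega
    rw [hsimp2] at hIH
    have hmul : (k : ℝ) * ((Nat.choose (Fintype.card m - 1) k : ℝ) * Real.log M.det)
        ≤ (k : ℝ) * ∑ J' ∈ Finset.univ.filter (fun J' : Finset m => J'.card = k + 1),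
            Real.log (psub M J').det :=
      mul_le_mul_of_nonneg_left hIH (by positivity)
    have hfin : ((Fintype.card m - k : ℕ) : ℝ) *
        ((Nat.choose (Fintype.card m - 1) (k - 1) : ℝ) * Real.log M.det)
        ≤ ((Fintype.card m - k : ℕ) : ℝ) *
          ∑ J ∈ Finset.univ.filter (fun J : Finset m => J.card = k),
            Real.log (psub M J).det := by
      calc ((Fintype.card m - k : ℕ) : ℝ) *
          ((Nat.choose (Fintype.card m - 1) (k - 1) : ℝ) * Real.log M.det)
          = (k : ℝ) * ((Nat.choose (Fintype.card m - 1) k : ℝ) * Real.log M.det) := by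
            rw [← mul_assoc, ← hchoose, mul_assoc]
        _ ≤ _ := le_trans hmul hsum
    have hpos : (0:ℝ) < ((Fintype.card m - k : ℕ) : ℝ) := by
      have : 0 < Fintype.card m - k := by omega
      exact_mod_cast this
    exact le_of_mul_le_mul_left hfin hpos

lemma sum_of_support (J : Finset m) (F : m → ℝ) (h : ∀ a ∉ J, F a = 0) :
    ∑ a : m, F a = ∑ a : ↥J, F ↑a := by
  rw [← Finset.sum_subset (Finset.subset_univ J) (fun a _ ha => h a ha),
    ← Finset.sum_attach J F, Finset.univ_eq_attach]

lemma dot_embed {n : ℕ} (J : Finset (Fin n)) (S : Matrix ↥J ↥J ℝ) (x : Fin n → ℝ) :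
    x ⬝ᵥ (Matrix.embed J S) *ᵥ x
      = (fun a : ↥J => x ↑a) ⬝ᵥ S *ᵥ (fun a : ↥J => x ↑a) := by
  simp only [dotProduct, Matrix.mulVec]
  rw [sum_of_support J (fun i => x i * ∑ j, Matrix.embed J S i j * x j)
    (fun a ha => by simp [Matrix.embed, ha])]
  refine Finset.sum_congr rfl fun a _ => ?_
  congr 1
  rw [sum_of_support J (fun j => Matrix.embed J S ↑a j * x j)
    (fun b hb => by simp [Matrix.embed, hb])]
  refine Finset.sum_congr rfl fun b _ => ?_
  simp [Matrix.embed, a.2, b.2]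

lemma trace_psub_embed {n : ℕ} (W : Matrix (Fin n) (Fin n) ℝ) (J : Finset (Fin n))
    (S : Matrix ↥J ↥J ℝ) :
    ((psub W J) * S).trace = (W * Matrix.embed J S).trace := by
  simp only [Matrix.trace, Matrix.diag, Matrix.mul_apply]
  rw [sum_of_support J (fun i => ∑ j, W i j * Matrix.embed J S j i)
    (fun a ha => by simp [Matrix.embed, ha])]
  refine Finset.sum_congr rfl fun a _ => ?_
  rw [sum_of_support J (fun j => W ↑a j * Matrix.embed J S j ↑a)
    (fun b hb => by simp [Matrix.embed, hb])]
  refine Finset.sum_congr rfl fun b _ => ?_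
  simp [Matrix.embed, psub, a.2, b.2]

lemma sum_mulVec' {α : Type*} (s : Finset α) (f : α → Matrix m m ℝ) (x : m → ℝ) :
    (∑ a ∈ s, f a) *ᵥ x = ∑ a ∈ s, f a *ᵥ x := by
  classical
  induction s using Finset.induction_on with
  | empty => simp
  | insert _ _ h ih => rw [Finset.sum_insert h, Finset.sum_insert h, Matrix.add_mulVec, ih]

lemma dotProduct_sum' {α : Type*} (s : Finset α) (v : m → ℝ) (w : α → (m → ℝ)) :
    v ⬝ᵥ (∑ a ∈ s, w a) = ∑ a ∈ s, v ⬝ᵥ w a := by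
  classical
  induction s using Finset.induction_on with
  | empty => simp
  | insert _ _ h ih => rw [Finset.sum_insert h, Finset.sum_insert h, dotProduct_add, ih]

lemma smul_posDef {M : Matrix m m ℝ} (hM : M.PosDef) {c : ℝ} (hc : 0 < c) :
    (c • M).PosDef := by
  refine Matrix.PosDef.of_dotProduct_mulVec_pos ?_ fun x hx => ?_
  · show (c • M)ᴴ = c • M
    rw [Matrix.conjTranspose_smul, hM.isHermitian.eq, star_trivial]
  · have hq := hM.dotProduct_mulVec_pos hx
    rw [Matrix.smul_mulVec, dotProduct_smul, smul_eq_mul]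
    exact mul_pos hc hq

lemma nat_choose_id {n k : ℕ} (hn : 0 < n) (hk : 0 < k) :
    Nat.choose n k * k = n * Nat.choose (n - 1) (k - 1) := by
  cases n with
  | zero => omega
  | succ n' =>
    cases k with
    | zero => omega
    | succ k' =>
      simpa [Nat.succ_sub_one] using (Nat.add_one_mul_choose_eq n' k').symm

end BarrierAux

/-- barrier comparison inequality,
`f^{FW(k)}(Y) ≥ c·f^{SDP}(Ψ(Y)) + n·c·log c` with `c = C(n−1,k−1)`. -/
theorem barrier_comparison {n k : ℕ} (hk : 0 < k) (hdvd : k ∣ n)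
    (Y : (J : Finset (Fin n)) → Matrix ↥J ↥J ℝ)
    (hY : ∀ J : Finset (Fin n), J.card = k → (Y J).PosDef)
    (X : Matrix (Fin n) (Fin n) ℝ)
    (hX : X = ∑ J ∈ Finset.univ.filter (fun J : Finset (Fin n) => J.card = k),
            Matrix.embed J (Y J)) :
    -(Nat.choose (n - 1) (k - 1) : ℝ) * Real.log X.det +
        (n : ℝ) * (Nat.choose (n - 1) (k - 1) : ℝ) *
          Real.log (Nat.choose (n - 1) (k - 1) : ℝ) ≤
      -∑ J ∈ Finset.univ.filter (fun J : Finset (Fin n) => J.card = k),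
          Real.log (Y J).det := by
  rcases Nat.eq_zero_or_pos n with hn | hnpos
  · subst hn
    have hF : Finset.univ.filter (fun J : Finset (Fin 0) => J.card = k) = ∅ := by
      ext J
      simp only [Finset.mem_filter, Finset.mem_univ, true_and, Finset.notMem_empty, iff_false]
      intro h
      have hJe : J = ∅ := Finset.eq_empty_of_forall_notMem (fun x _ => x.elim0)
      rw [hJe, Finset.card_empty] at h
      omega
    rw [hF]
    simp [Matrix.det_isEmpty]
  have hkn : k ≤ n := Nat.le_of_dvd hnpos hdvd
  set F := Finset.univ.filter (fun J : Finset (Fin n) => J.card = k) with hFdef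
  have hcardJ : ∀ J ∈ F, Fintype.card ↥J = k := fun J hJ => by
    rw [Fintype.card_coe]; exact (Finset.mem_filter.1 hJ).2
  have hYJ : ∀ J ∈ F, (Y J).PosDef := fun J hJ => hY J (Finset.mem_filter.1 hJ).2
  -- X is positive definite
  have hemb : ∀ J ∈ F, (Matrix.embed J (Y J)).IsHermitian := by
    intro J hJ
    have hS := (hYJ J hJ).isHermitian
    show _ᴴ = _
    ext i j
    simp only [Matrix.conjTranspose_apply, star_trivial, Matrix.embed]
    by_cases hi : i ∈ J <;> by_cases hj : j ∈ J <;> simp [hi, hj]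
    have := congrFun (congrFun hS ⟨i, hi⟩) ⟨j, hj⟩
    simpa using this
  have hXherm : X.IsHermitian := by
    rw [hX]
    show _ᴴ = _
    rw [Matrix.conjTranspose_sum]
    exact Finset.sum_congr rfl fun J hJ => hemb J hJ
  have hquad : ∀ x : Fin n → ℝ, x ⬝ᵥ X *ᵥ x
      = ∑ J ∈ F, (fun a : ↥J => x ↑a) ⬝ᵥ (Y J) *ᵥ (fun a : ↥J => x ↑a) := by
    intro x
    rw [hX, sum_mulVec', dotProduct_sum']
    exact Finset.sum_congr rfl fun J _ => dot_embed J (Y J) x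
  have hXpd : X.PosDef := by
    refine Matrix.PosDef.of_dotProduct_mulVec_pos hXherm fun x hx => ?_
    simp only [star_trivial]
    rw [hquad x]
    obtain ⟨i, hi⟩ := Function.ne_iff.1 hx
    obtain ⟨J0, hJ0sub, hJ0card⟩ := Finset.exists_superset_card_eq
      (s := ({i} : Finset (Fin n))) (by simpa using Nat.one_le_iff_ne_zero.2 hk.ne') (by simpa using hkn)
    have hJ0F : J0 ∈ F := Finset.mem_filter.2 ⟨Finset.mem_univ _, hJ0card⟩
    refine Finset.sum_pos' (fun J hJ => ?_) ⟨J0, hJ0F, ?_⟩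
    · have := (hYJ J hJ).posSemidef.dotProduct_mulVec_nonneg (fun a : ↥J => x ↑a)
      simpa using this
    · have hiJ0 : i ∈ J0 := hJ0sub (Finset.mem_singleton_self i)
      have hr : (fun a : ↥J0 => x ↑a) ≠ 0 := by
        intro h
        exact hi (by simpa using congrFun h ⟨i, hiJ0⟩)
      have := (hYJ J0 hJ0F).dotProduct_mulVec_pos hr
      simpa using this
  have hXinv : (X⁻¹).PosDef := hXpd.inv
  set c := Nat.choose (n - 1) (k - 1) with hcdef
  have hcpos : 0 < c := Nat.choose_pos (by omega)
  have hcR : (0:ℝ) < (c:ℝ) := by exact_mod_cast hcpos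
  set W := (c:ℝ) • X⁻¹ with hWdef
  have hWpd : W.PosDef := smul_posDef hXinv hcR
  -- per-J key inequality, summed
  have hkeyJ : ∀ J ∈ F, Real.log (Y J).det + Real.log (psub W J).det
      ≤ (W * Matrix.embed J (Y J)).trace - (k : ℝ) := by
    intro J hJ
    have := key_ineq (hYJ J hJ) (psub_posDef hWpd J)
    rw [hcardJ J hJ, trace_psub_embed W J (Y J)] at this
    exact this
  have hsummed : (∑ J ∈ F, Real.log (Y J).det) + (∑ J ∈ F, Real.log (psub W J).det)
      ≤ (c : ℝ) * (n : ℝ) - (F.card : ℝ) * (k : ℝ) := by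
    have h1 : ∑ J ∈ F, (Real.log (Y J).det + Real.log (psub W J).det)
        ≤ ∑ J ∈ F, ((W * Matrix.embed J (Y J)).trace - (k : ℝ)) :=
      Finset.sum_le_sum hkeyJ
    rw [Finset.sum_add_distrib] at h1
    rw [Finset.sum_sub_distrib, Finset.sum_const, nsmul_eq_mul] at h1
    have htr : ∑ J ∈ F, (W * Matrix.embed J (Y J)).trace = (c : ℝ) * (n : ℝ) := by
      rw [← Matrix.trace_sum, ← Matrix.mul_sum, ← hX, hWdef, Matrix.smul_mul,
        Matrix.trace_smul, Matrix.nonsing_inv_mul X hXpd.det_pos.ne'.isUnit,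
        Matrix.trace_one, smul_eq_mul]
      simp
    rw [htr] at h1
    exact h1
  -- rewrite the W-submatrix determinants
  have hlogW : ∀ J ∈ F, Real.log (psub W J).det
      = (k : ℝ) * Real.log (c : ℝ) + Real.log (psub X⁻¹ J).det := by
    intro J hJ
    have hps : psub W J = (c : ℝ) • psub X⁻¹ J := rfl
    rw [hps, Matrix.det_smul, hcardJ J hJ,
      Real.log_mul (by positivity) (psub_posDef hXinv J).det_pos.ne', Real.log_pow]
  have hWsum : ∑ J ∈ F, Real.log (psub W J).det
      = (F.card : ℝ) * ((k : ℝ) * Real.log (c : ℝ))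
        + ∑ J ∈ F, Real.log (psub X⁻¹ J).det := by
    rw [Finset.sum_congr rfl hlogW, Finset.sum_add_distrib, Finset.sum_const, nsmul_eq_mul]
  -- Szász inequality for X⁻¹
  have hsz : (c : ℝ) * Real.log (X⁻¹).det ≤ ∑ J ∈ F, Real.log (psub X⁻¹ J).det := by
    have := szasz_aux (n - k) X⁻¹ hXinv k hk (by rw [Fintype.card_fin]; omega)
    rw [Fintype.card_fin] at this
    exact this
  have hloginv : Real.log (X⁻¹).det = - Real.log X.det := by
    rw [Matrix.det_nonsing_inv, Ring.inverse_eq_inv', Real.log_inv]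
  rw [hloginv] at hsz
  -- cardinality of F
  have hcardF : F.card = Nat.choose n k := by
    have : F = Finset.powersetCard k (Finset.univ : Finset (Fin n)) := by
      ext J
      simp [hFdef, Finset.mem_powersetCard]
    rw [this, Finset.card_powersetCard, Finset.card_univ, Fintype.card_fin]
  have hNk : (F.card : ℝ) * (k : ℝ) = (n : ℝ) * (c : ℝ) := by
    rw [hcardF]
    exact_mod_cast nat_choose_id hnpos hk
  have hNklog : (F.card : ℝ) * ((k : ℝ) * Real.log (c:ℝ))
      = (n : ℝ) * (c : ℝ) * Real.log (c:ℝ) := by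
    rw [← mul_assoc, hNk]
  linarith [hsummed, hWsum, hsz, hNk, hNklog]
end

section
/- Norm contraction of the splitting operator: for any symmetric n×n matrix X, define Ψ†(X) to be the collection over k-subsets J of [n] of the k×k matrices ((1/C(n−1,k−1))·I + (1/C(n−2,k−2))·(ee^T − I)) ∘ X_{J,J} (Hadamard product). Then the norm Σ_{|J|=k} ‖(Ψ†(X))_J‖_F^2 ≤ ‖X‖_F^2, i.e., ‖Ψ†(X)‖_{(n,k)} ≤ ‖X‖_F. -/
open Matrix Finset

lemma count_subsets {α : Type*} [Fintype α] [DecidableEq α] {k : ℕ} (s : Finset α)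
    (hs : s.card ≤ k) :
    (univ.filter (fun J : Finset α => J.card = k ∧ s ⊆ J)).card
      = Nat.choose (Fintype.card α - s.card) (k - s.card) := by
  have h1 : (univ \ s).card = Fintype.card α - s.card := by
    rw [card_sdiff_of_subset (subset_univ s), card_univ]
  rw [← h1, ← Finset.card_powersetCard]
  apply Finset.card_nbij' (fun J => J \ s) (fun T => T ∪ s)
  · intro J hJ
    simp only [mem_coe, mem_filter, mem_univ, true_and] at hJ
    simp only [mem_coe, mem_powersetCard]
    exact ⟨sdiff_subset_sdiff (subset_univ J) le_rfl,
      by rw [card_sdiff_of_subset hJ.2, hJ.1]⟩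
  · intro T hT
    simp only [mem_coe, mem_powersetCard] at hT
    have hd : Disjoint T s := disjoint_of_subset_left hT.1 sdiff_disjoint
    simp only [mem_coe, mem_filter, mem_univ, true_and]
    exact ⟨by rw [card_union_of_disjoint hd, hT.2]; omega, subset_union_right⟩
  · intro J hJ
    simp only [mem_coe, mem_filter, mem_univ, true_and] at hJ
    exact sdiff_union_of_subset hJ.2
  · intro T hT
    simp only [mem_coe, mem_powersetCard] at hT
    exact union_sdiff_cancel_right (disjoint_of_subset_left hT.1 sdiff_disjoint)

lemma aux_contract (c x : ℝ) (hc : 1 ≤ c) : c * (c⁻¹ * x) ^ 2 ≤ x ^ 2 := by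
  have hc0 : (0:ℝ) < c := lt_of_lt_of_le one_pos hc
  have h : c * (c⁻¹ * x) ^ 2 = c⁻¹ * x ^ 2 := by field_simp
  rw [h]
  have h1 : c⁻¹ ≤ 1 := by rw [inv_le_one_iff₀]; right; exact hc
  nlinarith [sq_nonneg x]


/-- norm contraction of the splitting operator `Ψ†`:
`‖Ψ†(X)‖_{(n,k)} ≤ ‖X‖_F` (stated with squared norms). -/
theorem splitting_operator_norm_contraction {n k : ℕ} (hk : 2 ≤ k) (hkn : k ≤ n)
    (X : Matrix (Fin n) (Fin n) ℝ) (hX : X.IsSymm) :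
    ∑ J ∈ Finset.univ.filter (fun J : Finset (Fin n) => J.card = k),
      ∑ a : ↥J, ∑ b : ↥J,
        ((if a = b then ((Nat.choose (n - 1) (k - 1) : ℝ))⁻¹
            else ((Nat.choose (n - 2) (k - 2) : ℝ))⁻¹) * X a.1 b.1) ^ 2
      ≤ ∑ i, ∑ j, (X i j) ^ 2 := by
  classical
  set F : Fin n → Fin n → ℝ := fun i j =>
    ((if i = j then ((Nat.choose (n - 1) (k - 1) : ℝ))⁻¹
        else ((Nat.choose (n - 2) (k - 2) : ℝ))⁻¹) * X i j) ^ 2 with hF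
  have key : (∑ J ∈ Finset.univ.filter (fun J : Finset (Fin n) => J.card = k),
      ∑ a : ↥J, ∑ b : ↥J,
        ((if a = b then ((Nat.choose (n - 1) (k - 1) : ℝ))⁻¹
            else ((Nat.choose (n - 2) (k - 2) : ℝ))⁻¹) * X a.1 b.1) ^ 2)
      = ∑ i, ∑ j,
        ((univ.filter (fun J : Finset (Fin n) => J.card = k ∧ (i ∈ J ∧ j ∈ J))).card : ℝ)
          * F i j := by
    have step1 : ∀ J : Finset (Fin n),
        (∑ a : ↥J, ∑ b : ↥J,
          ((if a = b then ((Nat.choose (n - 1) (k - 1) : ℝ))⁻¹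
              else ((Nat.choose (n - 2) (k - 2) : ℝ))⁻¹) * X a.1 b.1) ^ 2)
          = ∑ i, ∑ j, if i ∈ J ∧ j ∈ J then F i j else 0 := by
      intro J
      have e1 : (∑ a : ↥J, ∑ b : ↥J,
          ((if a = b then ((Nat.choose (n - 1) (k - 1) : ℝ))⁻¹
              else ((Nat.choose (n - 2) (k - 2) : ℝ))⁻¹) * X a.1 b.1) ^ 2)
          = ∑ i ∈ J, ∑ j ∈ J, F i j := by
        rw [← Finset.sum_coe_sort J (fun i => ∑ j ∈ J, F i j)]
        refine Finset.sum_congr rfl fun a _ => ?_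
        rw [← Finset.sum_coe_sort J (fun j => F a.1 j)]
        refine Finset.sum_congr rfl fun b _ => ?_
        simp only [hF, Subtype.ext_iff]
      rw [e1]
      have e2 : (∑ i, ∑ j, if i ∈ J ∧ j ∈ J then F i j else 0)
          = ∑ i, if i ∈ J then (∑ j, if j ∈ J then F i j else 0) else 0 := by
        refine Finset.sum_congr rfl fun i _ => ?_
        by_cases hi : i ∈ J <;> simp [hi]
      rw [e2, Finset.sum_ite_mem, univ_inter]
      exact Finset.sum_congr rfl fun i _ => by rw [Finset.sum_ite_mem, univ_inter]
    calc (∑ J ∈ Finset.univ.filter (fun J : Finset (Fin n) => J.card = k),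
          ∑ a : ↥J, ∑ b : ↥J,
            ((if a = b then ((Nat.choose (n - 1) (k - 1) : ℝ))⁻¹
                else ((Nat.choose (n - 2) (k - 2) : ℝ))⁻¹) * X a.1 b.1) ^ 2)
        = ∑ J ∈ Finset.univ.filter (fun J : Finset (Fin n) => J.card = k),
            ∑ i, ∑ j, if i ∈ J ∧ j ∈ J then F i j else 0 :=
          Finset.sum_congr rfl fun J _ => step1 J
      _ = ∑ i, ∑ J ∈ Finset.univ.filter (fun J : Finset (Fin n) => J.card = k),
            ∑ j, if i ∈ J ∧ j ∈ J then F i j else 0 := Finset.sum_comm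
      _ = ∑ i, ∑ j, ∑ J ∈ Finset.univ.filter (fun J : Finset (Fin n) => J.card = k),
            if i ∈ J ∧ j ∈ J then F i j else 0 :=
          Finset.sum_congr rfl fun i _ => Finset.sum_comm
      _ = ∑ i, ∑ j,
            ((univ.filter (fun J : Finset (Fin n) => J.card = k ∧ (i ∈ J ∧ j ∈ J))).card : ℝ)
              * F i j := by
          refine Finset.sum_congr rfl fun i _ => Finset.sum_congr rfl fun j _ => ?_
          rw [← Finset.sum_filter, Finset.filter_filter, Finset.sum_const, nsmul_eq_mul]
  rw [key]
  refine Finset.sum_le_sum fun i _ => Finset.sum_le_sum fun j _ => ?_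
  by_cases hij : i = j
  · subst hij
    have hc : (univ.filter (fun J : Finset (Fin n) => J.card = k ∧ (i ∈ J ∧ i ∈ J))).card
        = Nat.choose (n - 1) (k - 1) := by
      have := count_subsets (α := Fin n) ({i} : Finset (Fin n)) (k := k) (by rw [Finset.card_singleton]; omega)
      simp only [Finset.card_singleton, Fintype.card_fin, Finset.singleton_subset_iff] at this
      rw [← this]
      congr 1
      exact Finset.filter_congr fun J _ => by tauto
    rw [hc]
    have hFi : F i i = ((Nat.choose (n - 1) (k - 1) : ℝ)⁻¹ * X i i) ^ 2 := by simp [hF]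
    rw [hFi]
    exact aux_contract _ _ (Nat.one_le_cast.mpr (Nat.choose_pos (show k - 1 ≤ n - 1 by omega)))
  · have hc : (univ.filter (fun J : Finset (Fin n) => J.card = k ∧ (i ∈ J ∧ j ∈ J))).card
        = Nat.choose (n - 2) (k - 2) := by
      have := count_subsets (α := Fin n) ({i, j} : Finset (Fin n)) (k := k)
        (by rw [Finset.card_insert_of_notMem (by simp [hij]), Finset.card_singleton]; omega)
      rw [Finset.card_insert_of_notMem (by simp [hij]), Finset.card_singleton,
        Fintype.card_fin] at this
      rw [← this]
      congr 1
      refine Finset.filter_congr fun J _ => ?_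
      simp [Finset.insert_subset_iff, Finset.singleton_subset_iff]
    rw [hc]
    have hFj : F i j = ((Nat.choose (n - 2) (k - 2) : ℝ)⁻¹ * X i j) ^ 2 := by simp [hF, hij]
    rw [hFj]
    exact aux_contract _ _ (Nat.one_le_cast.mpr (Nat.choose_pos (show k - 2 ≤ n - 2 by omega)))
end

section
/- Monotone decrease of the iterative relaxation scheme: suppose X_ℓ is an optimal solution of the relaxed program v_ℓ = min{⟨A_0^{(ℓ)}, X⟩ : 𝒜^{(ℓ)}(X) = b, X ∈ K} where K ⊆ S^n_+ is a cone containing the identity matrix, and set A_i^{(ℓ+1)} = (X*)^{1/2} A_i^{(ℓ)} (X*)^{1/2} for an optimal solution X* of the ℓ-th program. Then the optimal value of the (ℓ+1)-st program satisfies v_{ℓ+1} ≤ v_ℓ, and v_ℓ ≥ v*_{SDP} for all ℓ, where v*_{SDP} is the optimum of the SDP obtained by replacing K with S^n_+. -/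
open Matrix Finset

/-- The positive semidefinite square root of a positive semidefinite matrix
(Mathlib's former `Matrix.PosSemidef.sqrt`, removed since; restated with its old definition). -/
noncomputable def Matrix.PosSemidef.sqrt {n : Type*} [Fintype n] [DecidableEq n] {𝕜 : Type*}
    [RCLike 𝕜] [PartialOrder 𝕜] {A : Matrix n n 𝕜} (hA : A.PosSemidef) : Matrix n n 𝕜 :=
  hA.1.eigenvectorUnitary.1 * diagonal ((↑) ∘ (√·) ∘ hA.1.eigenvalues) *
  (star hA.1.eigenvectorUnitary : Matrix n n 𝕜)

/-- one step of the iterative relaxation scheme. If `X*` is an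
optimal solution of the relaxed program over a cone `K ⊆ S^n_+` containing `I`,
with optimal value `vℓ`, then after rescaling the data by `(X*)^{1/2}` the new
optimal value satisfies `vnext ≤ vℓ`, and `vℓ ≥ v_SDP`. -/
theorem iterative_scheme_monotone {n m : ℕ} (K : Set (Matrix (Fin n) (Fin n) ℝ))
    (hK : ∀ X ∈ K, X.PosSemidef) (hIK : (1 : Matrix (Fin n) (Fin n) ℝ) ∈ K)
    (A : Fin m → Matrix (Fin n) (Fin n) ℝ) (A0 : Matrix (Fin n) (Fin n) ℝ)
    (b : Fin m → ℝ) (Xstar : Matrix (Fin n) (Fin n) ℝ)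
    (hXK : Xstar ∈ K) (hfeas : ∀ i, (A i * Xstar).trace = b i)
    (vl vnext vSDP : ℝ)
    (hopt : IsLeast {v | ∃ X ∈ K, (∀ i, (A i * X).trace = b i) ∧ (A0 * X).trace = v} vl)
    (hvl : (A0 * Xstar).trace = vl)
    (hnext : IsGLB {v | ∃ X ∈ K,
        (∀ i, ((hK Xstar hXK).sqrt * A i * (hK Xstar hXK).sqrt * X).trace = b i) ∧
        ((hK Xstar hXK).sqrt * A0 * (hK Xstar hXK).sqrt * X).trace = v} vnext)
    (hSDP : IsGLB {v | ∃ X : Matrix (Fin n) (Fin n) ℝ, X.PosSemidef ∧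
        (∀ i, (A i * X).trace = b i) ∧ (A0 * X).trace = v} vSDP) :
    vnext ≤ vl ∧ vSDP ≤ vl := by
  have hS : (hK Xstar hXK).sqrt * (hK Xstar hXK).sqrt = Xstar := by
    have hA := hK Xstar hXK
    conv_rhs => rw [(hK Xstar hXK).1.spectral_theorem, Unitary.conjStarAlgAut_apply]
    unfold Matrix.PosSemidef.sqrt
    have hU : (star (hK Xstar hXK).1.eigenvectorUnitary : Matrix (Fin n) (Fin n) ℝ) *
        (hK Xstar hXK).1.eigenvectorUnitary = 1 := (hK Xstar hXK).1.eigenvectorUnitary.2.1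
    simp only [Matrix.mul_assoc]
    rw [← Matrix.mul_assoc (star _ : Matrix (Fin n) (Fin n) ℝ), hU, Matrix.one_mul,
      ← Matrix.mul_assoc (diagonal _), diagonal_mul_diagonal]
    congr 3
    funext i
    have := (hK Xstar hXK).eigenvalues_nonneg i
    simp [Function.comp, Real.mul_self_sqrt this]
  have key : ∀ B : Matrix (Fin n) (Fin n) ℝ,
      ((hK Xstar hXK).sqrt * B * (hK Xstar hXK).sqrt * 1).trace = (B * Xstar).trace := by
    intro B
    rw [mul_one, Matrix.trace_mul_cycle, hS, Matrix.trace_mul_comm]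
  constructor
  · exact hnext.1 ⟨1, hIK, fun i => (key (A i)).trans (hfeas i), (key A0).trans hvl⟩
  · exact hSDP.1 ⟨Xstar, hK Xstar hXK, hfeas, hvl⟩
end

section
/- Baranyai's theorem: if k divides n, then the edge set of the complete k-uniform hypergraph on n vertices (i.e., all k-element subsets of [n]) can be partitioned into C(n−1,k−1) classes, each of which is a perfect matching (a collection of n/k pairwise disjoint k-subsets covering [n]). -/
open Matrix Finset

/-- Number of times a part `A` must receive the new element. -/
def bdel (n k ℓ : ℕ) (A : Finset (Fin n)) : ℕ :=
  if A.card < k then (n - ℓ - 1).choose (k - A.card - 1) else 0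

lemma card_filter_lt_fin (n ℓ : ℕ) (hℓ : ℓ ≤ n) :
    (Finset.univ.filter (fun x : Fin n => (x : ℕ) < ℓ)).card = ℓ := by
  have h : (Finset.univ.filter (fun x : Fin n => (x : ℕ) < ℓ))
      = Finset.image (Fin.castLE hℓ) Finset.univ := by
    ext x
    simp only [Finset.mem_filter, Finset.mem_univ, true_and, Finset.mem_image]
    constructor
    · intro hx; exact ⟨⟨x, hx⟩, rfl⟩
    · rintro ⟨y, rfl⟩; exact y.isLt
  rw [h, Finset.card_image_of_injective _ (Fin.castLE_injective hℓ)]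
  simp

lemma baranyai_select {n k m M : ℕ} (hk : 0 < k) (hn : n = m * k)
    (hM : M = (n - 1).choose (k - 1)) (ℓ : ℕ) (hℓ : ℓ < n)
    (f : Fin M → Fin m → Finset (Fin n))
    (h1 : ∀ i j, ∀ x ∈ f i j, (x : ℕ) < ℓ)
    (h2 : ∀ i j, (f i j).card ≤ k)
    (h3 : ∀ i, ∀ x : Fin n, (x : ℕ) < ℓ → ∃! j, x ∈ f i j)
    (h4 : ∀ A : Finset (Fin n), A.card ≤ k → (∀ x ∈ A, (x : ℕ) < ℓ) →
      (Finset.univ.filter (fun p : Fin M × Fin m => f p.1 p.2 = A)).card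
        = (n - ℓ).choose (k - A.card)) :
    ∃ s : Fin M → Fin m,
      (∀ i, (f i (s i)).card < k) ∧
      (∀ A : Finset (Fin n), (∀ x ∈ A, (x : ℕ) < ℓ) →
        (Finset.univ.filter (fun i => f i (s i) = A)).card = bdel n k ℓ A) := by
  classical
  set R : Finset (Fin n) := Finset.univ.filter (fun x => (x : ℕ) < ℓ) with hRdef
  have hRcard : R.card = ℓ := card_filter_lt_fin n ℓ (le_of_lt hℓ)
  have key : ∀ A : Finset (Fin n), A.card ≤ k → (∀ x ∈ A, (x : ℕ) < ℓ) →
      (Finset.univ.filter (fun p : Fin M × Fin m => f p.1 p.2 = A)).card * (k - A.card)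
        = bdel n k ℓ A * (n - ℓ) := by
    intro A hAk hAR
    rcases eq_or_lt_of_le hAk with h | h
    · simp [bdel, h, Nat.sub_self]
    · rw [h4 A hAk hAR, bdel, if_pos h]
      have eN : n - ℓ = (n - ℓ - 1) + 1 := by omega
      have eK : k - A.card = (k - A.card - 1) + 1 := by omega
      rw [eN, eK]
      have h5 := Nat.add_one_mul_choose_eq (n - ℓ - 1) (k - A.card - 1)
      rw [← h5]
      exact Nat.mul_comm _ _
  have hsumcard : ∀ i, ∑ j, (f i j).card = ℓ := by
    intro i
    have hdisj : ∀ j₁ ∈ (univ : Finset (Fin m)), ∀ j₂ ∈ univ, j₁ ≠ j₂ →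
        Disjoint (f i j₁) (f i j₂) := by
      intro j₁ _ j₂ _ hne
      rw [Finset.disjoint_left]
      intro x hx1 hx2
      obtain ⟨j₀, _, huniq⟩ := h3 i x (h1 i j₁ x hx1)
      exact hne ((huniq j₁ hx1).trans (huniq j₂ hx2).symm)
    have hbu : Finset.univ.biUnion (f i) = R := by
      ext x
      constructor
      · intro hx
        rw [hRdef, Finset.mem_filter]
        obtain ⟨j, -, hj⟩ := Finset.mem_biUnion.mp hx
        exact ⟨Finset.mem_univ x, h1 i j x hj⟩
      · intro hx
        rw [hRdef, Finset.mem_filter] at hx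
        obtain ⟨j, hj, -⟩ := h3 i x hx.2
        exact Finset.mem_biUnion.mpr ⟨j, Finset.mem_univ j, hj⟩
    calc ∑ j, (f i j).card = (Finset.univ.biUnion (f i)).card :=
          (Finset.card_biUnion hdisj).symm
      _ = R.card := by rw [hbu]
      _ = ℓ := hRcard
  have hslack : ∀ i, ∑ j : Fin m, (k - (f i j).card) = n - ℓ := by
    intro i
    have h' : ∑ j : Fin m, ((k - (f i j).card) + (f i j).card) = m * k := by
      rw [Finset.sum_congr rfl fun j _ => Nat.sub_add_cancel (h2 i j)]
      simp [Finset.sum_const, Finset.card_univ, mul_comm]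
    rw [Finset.sum_add_distrib, hsumcard i, ← hn] at h'
    omega
  have hVan : ∑ A ∈ R.powerset, bdel n k ℓ A = M := by
    have e1 : ∑ A ∈ R.powerset, bdel n k ℓ A
        = ∑ j ∈ Finset.range (ℓ + 1), ℓ.choose j *
            (if j < k then (n - ℓ - 1).choose (k - j - 1) else 0) := by
      rw [Finset.sum_powerset R (bdel n k ℓ), hRcard]
      refine Finset.sum_congr rfl fun j _ => ?_
      have h6 := Finset.sum_powersetCard j R
        (fun c => if c < k then (n - ℓ - 1).choose (k - c - 1) else 0)
      rw [hRcard] at h6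
      simpa [bdel, smul_eq_mul] using h6
    have e2 : M = ∑ x ∈ Finset.range k, ℓ.choose x * (n - ℓ - 1).choose (k - 1 - x) := by
      have hsplit : ℓ + (n - ℓ - 1) = n - 1 := by omega
      have hkk : (k - 1).succ = k := by omega
      have hvdm := Nat.add_choose_eq ℓ (n - ℓ - 1) (k - 1)
      rw [Finset.Nat.sum_antidiagonal_eq_sum_range_succ_mk, hsplit, hkk] at hvdm
      rw [hM]
      exact hvdm
    rw [e1, e2]
    have zero_hi : ∀ x ∈ Finset.range (ℓ + 1 + k), x ∉ Finset.range (ℓ + 1) →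
        ℓ.choose x * (if x < k then (n - ℓ - 1).choose (k - x - 1) else 0) = 0 := by
      intro x _ hx2
      have hgt : ℓ + 1 ≤ x := by simpa [Finset.mem_range] using hx2
      simp [Nat.choose_eq_zero_of_lt (by omega : ℓ < x)]
    have zero_lo : ∀ x ∈ Finset.range (ℓ + 1 + k), x ∉ Finset.range k →
        ℓ.choose x * (if x < k then (n - ℓ - 1).choose (k - x - 1) else 0) = 0 := by
      intro x _ hx2
      have hge : k ≤ x := by simpa [Finset.mem_range] using hx2
      rw [if_neg (by omega), Nat.mul_zero]
    rw [Finset.sum_subset (Finset.range_subset_range.mpr (by omega : ℓ + 1 ≤ ℓ + 1 + k)) zero_hi]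
    rw [← Finset.sum_subset (Finset.range_subset_range.mpr (by omega : k ≤ ℓ + 1 + k)) zero_lo]
    refine Finset.sum_congr rfl fun x hx => ?_
    have hxk : x < k := Finset.mem_range.mp hx
    rw [if_pos hxk]
    congr 2
    omega
  -- Hall's condition
  set slots : Finset (Fin n) → Finset (Finset (Fin n) × ℕ) :=
    fun A => (Finset.range (bdel n k ℓ A)).image fun r => (A, r) with hslots
  set t : Fin M → Finset (Finset (Fin n) × ℕ) :=
    fun i => (Finset.univ.image (f i)).biUnion slots with ht
  have hslotcard : ∀ A, (slots A).card = bdel n k ℓ A := by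
    intro A
    rw [hslots]
    rw [Finset.card_image_of_injective _ (fun a b hab => by
      simpa using Prod.ext_iff.mp hab |>.2)]
    exact Finset.card_range _
  have hslotfst : ∀ A p, p ∈ slots A → p.1 = A ∧ p.2 < bdel n k ℓ A := by
    intro A p hp
    rw [hslots] at hp
    simp only [Finset.mem_image, Finset.mem_range] at hp
    obtain ⟨r, hr, hEq⟩ := hp
    rw [← hEq]
    exact ⟨rfl, hr⟩
  have hall : ∀ S : Finset (Fin M), S.card ≤ (S.biUnion t).card := by
    intro S
    set P := S.biUnion (fun i => Finset.univ.image (f i)) with hP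
    have hbu : S.biUnion t = P.biUnion slots := by
      rw [hP, Finset.biUnion_biUnion]
    have hPdisj : ∀ A ∈ P, ∀ B ∈ P, A ≠ B → Disjoint (slots A) (slots B) := by
      intro A _ B _ hAB
      rw [Finset.disjoint_left]
      intro a ha hb
      exact hAB (((hslotfst A a ha).1.symm).trans (hslotfst B a hb).1)
    have hcard : (P.biUnion slots).card = ∑ A ∈ P, bdel n k ℓ A := by
      rw [Finset.card_biUnion hPdisj]
      exact Finset.sum_congr rfl fun A _ => hslotcard A
    rw [hbu, hcard]
    have hpos : 0 < n - ℓ := by omega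
    refine Nat.le_of_mul_le_mul_right ?_ hpos
    have lhs1 : S.card * (n - ℓ) = ∑ p ∈ S ×ˢ Finset.univ, (k - (f p.1 p.2).card) := by
      rw [Finset.sum_product]
      rw [Finset.sum_congr rfl fun i (_ : i ∈ S) => hslack i]
      simp [mul_comm]
    have fib : ∑ A ∈ P, ∑ p ∈ (S ×ˢ Finset.univ).filter (fun p => f p.1 p.2 = A),
          (k - (f p.1 p.2).card)
        = ∑ p ∈ S ×ˢ Finset.univ, (k - (f p.1 p.2).card) := by
      rw [Finset.sum_fiberwise_eq_sum_filter]
      rw [Finset.filter_true_of_mem]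
      intro p hp
      rw [hP]
      exact Finset.mem_biUnion.mpr ⟨p.1, (Finset.mem_product.mp hp).1,
        Finset.mem_image_of_mem _ (Finset.mem_univ p.2)⟩
    have inner_le : ∀ A ∈ P,
        ∑ p ∈ (S ×ˢ Finset.univ).filter (fun p => f p.1 p.2 = A), (k - (f p.1 p.2).card)
          ≤ bdel n k ℓ A * (n - ℓ) := by
      intro A hA
      rw [hP] at hA
      obtain ⟨i, hiS, hAim⟩ := Finset.mem_biUnion.mp hA
      obtain ⟨j, -, hij⟩ := Finset.mem_image.mp hAim
      have hAk : A.card ≤ k := hij ▸ h2 i j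
      have hAR : ∀ x ∈ A, (x : ℕ) < ℓ := fun x hx => h1 i j x (hij ▸ hx)
      have e3 : ∑ p ∈ (S ×ˢ Finset.univ).filter (fun p => f p.1 p.2 = A),
          (k - (f p.1 p.2).card)
          = ((S ×ˢ Finset.univ).filter (fun p => f p.1 p.2 = A)).card * (k - A.card) := by
        rw [Finset.sum_congr rfl (fun p hp => by
          rw [(Finset.mem_filter.mp hp).2])]
        simp [mul_comm]
      rw [e3]
      calc ((S ×ˢ Finset.univ).filter (fun p => f p.1 p.2 = A)).card * (k - A.card)
          ≤ (Finset.univ.filter (fun p : Fin M × Fin m => f p.1 p.2 = A)).card * (k - A.card) :=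
            Nat.mul_le_mul_right _ (Finset.card_le_card
              (Finset.filter_subset_filter _ (Finset.subset_univ _)))
        _ = bdel n k ℓ A * (n - ℓ) := key A hAk hAR
    calc S.card * (n - ℓ) = ∑ p ∈ S ×ˢ Finset.univ, (k - (f p.1 p.2).card) := lhs1
      _ = ∑ A ∈ P, ∑ p ∈ (S ×ˢ Finset.univ).filter (fun p => f p.1 p.2 = A),
            (k - (f p.1 p.2).card) := fib.symm
      _ ≤ ∑ A ∈ P, bdel n k ℓ A * (n - ℓ) := Finset.sum_le_sum inner_le
      _ = (∑ A ∈ P, bdel n k ℓ A) * (n - ℓ) := (Finset.sum_mul _ _ _).symm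
  obtain ⟨g, hginj, hgmem⟩ := (Finset.all_card_le_biUnion_card_iff_exists_injective t).mp hall
  have hg1 : ∀ i, (∃ j, f i j = (g i).1) ∧ (g i).2 < bdel n k ℓ ((g i).1) := by
    intro i
    have hm := hgmem i
    rw [ht, Finset.mem_biUnion] at hm
    obtain ⟨A, hA, hslot⟩ := hm
    obtain ⟨hfst, hsnd⟩ := hslotfst A _ hslot
    obtain ⟨j, -, hj⟩ := Finset.mem_image.mp hA
    subst hfst
    exact ⟨⟨j, hj⟩, hsnd⟩
  choose s hs using fun i => (hg1 i).1
  have hcnt_le : ∀ A, (Finset.univ.filter fun i => (g i).1 = A).card ≤ bdel n k ℓ A := by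
    intro A
    have := Finset.card_le_card_of_injOn
      (s := Finset.univ.filter fun i => (g i).1 = A)
      (t := Finset.range (bdel n k ℓ A)) (fun i => (g i).2) ?_ ?_
    · simpa using this
    · intro i hi
      rw [Finset.mem_coe, Finset.mem_range, ← (Finset.mem_filter.mp (Finset.mem_coe.mp hi)).2]
      exact (hg1 i).2
    · intro i hi i' hi' hEq
      simp only [Finset.coe_filter, Set.mem_setOf_eq] at hi hi'
      apply hginj
      exact Prod.ext (hi.2.trans hi'.2.symm) hEq
  have hsum_cnt : ∑ A ∈ R.powerset, (Finset.univ.filter fun i => (g i).1 = A).card = M := by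
    have hmapsto : ∀ i : Fin M, i ∈ (Finset.univ : Finset (Fin M)) → (g i).1 ∈ R.powerset := by
      intro i _
      rw [Finset.mem_powerset, ← hs i]
      intro x hx
      rw [hRdef, Finset.mem_filter]
      exact ⟨Finset.mem_univ x, h1 i (s i) x hx⟩
    have := Finset.card_eq_sum_card_fiberwise hmapsto
    rw [← this]
    simp
  have hcnt : ∀ A ∈ R.powerset, (Finset.univ.filter fun i => (g i).1 = A).card
      = bdel n k ℓ A := by
    by_contra hcon
    push_neg at hcon
    obtain ⟨A, hA, hne⟩ := hcon
    have hlt : (Finset.univ.filter fun i => (g i).1 = A).card < bdel n k ℓ A :=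
      lt_of_le_of_ne (hcnt_le A) hne
    have := Finset.sum_lt_sum (fun B (_ : B ∈ R.powerset) => hcnt_le B) ⟨A, hA, hlt⟩
    rw [hsum_cnt, hVan] at this
    exact lt_irrefl M this
  refine ⟨s, ?_, ?_⟩
  · intro i
    have hlt := (hg1 i).2
    by_contra hge
    push_neg at hge
    rw [hs i] at hge
    rw [bdel, if_neg (not_lt.mpr hge)] at hlt
    omega
  · intro A hAR
    have hfe : (Finset.univ.filter fun i => f i (s i) = A)
        = (Finset.univ.filter fun i => (g i).1 = A) := by
      apply Finset.filter_congr
      intro i _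
      rw [hs i]
    rw [hfe]
    apply hcnt
    rw [Finset.mem_powerset]
    intro x hx
    rw [hRdef, Finset.mem_filter]
    exact ⟨Finset.mem_univ x, hAR x hx⟩

lemma baranyai_step {n k m M : ℕ} (hk : 0 < k) (hn : n = m * k)
    (hM : M = (n - 1).choose (k - 1)) (ℓ : ℕ) (hℓ : ℓ < n)
    (f : Fin M → Fin m → Finset (Fin n))
    (h1 : ∀ i j, ∀ x ∈ f i j, (x : ℕ) < ℓ)
    (h2 : ∀ i j, (f i j).card ≤ k)
    (h3 : ∀ i, ∀ x : Fin n, (x : ℕ) < ℓ → ∃! j, x ∈ f i j)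
    (h4 : ∀ A : Finset (Fin n), A.card ≤ k → (∀ x ∈ A, (x : ℕ) < ℓ) →
      (Finset.univ.filter (fun p : Fin M × Fin m => f p.1 p.2 = A)).card
        = (n - ℓ).choose (k - A.card)) :
    ∃ f' : Fin M → Fin m → Finset (Fin n),
      (∀ i j, ∀ x ∈ f' i j, (x : ℕ) < ℓ + 1) ∧
      (∀ i j, (f' i j).card ≤ k) ∧
      (∀ i, ∀ x : Fin n, (x : ℕ) < ℓ + 1 → ∃! j, x ∈ f' i j) ∧
      (∀ A : Finset (Fin n), A.card ≤ k → (∀ x ∈ A, (x : ℕ) < ℓ + 1) →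
        (Finset.univ.filter (fun p : Fin M × Fin m => f' p.1 p.2 = A)).card
          = (n - (ℓ + 1)).choose (k - A.card)) := by
  classical
  obtain ⟨s, hs1, hs2⟩ := baranyai_select hk hn hM ℓ hℓ f h1 h2 h3 h4
  set xl : Fin n := ⟨ℓ, hℓ⟩ with hxl
  have hxnot : ∀ i j, xl ∉ f i j := fun i j hx => lt_irrefl ℓ (h1 i j xl hx)
  set f' : Fin M → Fin m → Finset (Fin n) :=
    fun i j => if j = s i then insert xl (f i j) else f i j with hf'
  have hf'val : ∀ i j, f' i j = if j = s i then insert xl (f i j) else f i j :=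
    fun i j => rfl
  -- helper: pair filter with diagonal condition
  have pairhelper : ∀ B : Finset (Fin n),
      (Finset.univ.filter (fun p : Fin M × Fin m =>
        p.2 = s p.1 ∧ f p.1 (s p.1) = B)).card
      = (Finset.univ.filter (fun i => f i (s i) = B)).card := by
    intro B
    apply Finset.card_bij' (fun p _ => p.1) (fun i _ => (i, s i))
    · intro p hp
      exact Finset.mem_filter.mpr ⟨Finset.mem_univ _, (Finset.mem_filter.mp hp).2.2⟩
    · intro i hi
      exact Finset.mem_filter.mpr ⟨Finset.mem_univ _, rfl, (Finset.mem_filter.mp hi).2⟩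
    · intro p hp
      exact Prod.ext rfl ((Finset.mem_filter.mp hp).2.1).symm
    · intro i hi
      rfl
  refine ⟨f', ?_, ?_, ?_, ?_⟩
  · -- h1'
    intro i j x hx
    rw [hf'val] at hx
    by_cases hj : j = s i
    · rw [if_pos hj] at hx
      rcases Finset.mem_insert.mp hx with h | h
      · rw [h, hxl]; exact Nat.lt_succ_self ℓ
      · exact Nat.lt_succ_of_lt (h1 i j x h)
    · rw [if_neg hj] at hx
      exact Nat.lt_succ_of_lt (h1 i j x hx)
  · -- h2'
    intro i j
    rw [hf'val]
    by_cases hj : j = s i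
    · rw [if_pos hj, Finset.card_insert_of_notMem (hxnot i j), hj]
      exact Nat.succ_le_of_lt (hs1 i)
    · rw [if_neg hj]; exact h2 i j
  · -- h3'
    intro i x hx
    by_cases hxe : (x : ℕ) = ℓ
    · have hxeq : x = xl := Fin.ext (by rw [hxe, hxl])
      subst hxeq
      refine ⟨s i, ?_, ?_⟩
      · show xl ∈ f' i (s i)
        rw [hf'val, if_pos rfl]; exact Finset.mem_insert_self _ _
      · intro j hj
        have hj' : xl ∈ f' i j := hj
        by_contra hne
        rw [hf'val, if_neg hne] at hj'
        exact hxnot i j hj'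
    · have hxlt : (x : ℕ) < ℓ := by omega
      have hne : x ≠ xl := fun h => hxe (by rw [h, hxl])
      obtain ⟨j₀, hj₀, huniq⟩ := h3 i x hxlt
      have hmem_iff : ∀ j, (x ∈ f' i j ↔ x ∈ f i j) := by
        intro j
        rw [hf'val]
        by_cases hj : j = s i
        · rw [if_pos hj, Finset.mem_insert]
          constructor
          · rintro (h | h)
            · exact absurd h hne
            · exact h
          · exact fun h => Or.inr h
        · rw [if_neg hj]
      exact ⟨j₀, (hmem_iff j₀).mpr hj₀, fun j hj => huniq j ((hmem_iff j).mp hj)⟩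
  · -- h4'
    intro A hAk hAsub
    by_cases hmem : xl ∈ A
    · -- case xl ∈ A
      have hApos : 0 < A.card := Finset.card_pos.mpr ⟨xl, hmem⟩
      set B := A.erase xl with hB
      have hBsub : ∀ x ∈ B, (x : ℕ) < ℓ := by
        intro x hx
        have hxA := Finset.mem_of_mem_erase hx
        have hxne := Finset.ne_of_mem_erase hx
        have hlt := hAsub x hxA
        by_contra h'
        push_neg at h'
        have hxe : (x : ℕ) = ℓ := by omega
        exact hxne (Fin.ext (by rw [hxe, hxl]))
      have hBcard : B.card = A.card - 1 := Finset.card_erase_of_mem hmem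
      have hfeq : (Finset.univ.filter (fun p : Fin M × Fin m => f' p.1 p.2 = A))
          = (Finset.univ.filter (fun p : Fin M × Fin m =>
              p.2 = s p.1 ∧ f p.1 (s p.1) = B)) := by
        apply Finset.filter_congr
        intro p _
        rw [hf'val]
        constructor
        · intro hA'
          by_cases hps : p.2 = s p.1
          · rw [if_pos hps] at hA'
            refine ⟨hps, ?_⟩
            rw [← hps, hB, ← hA', Finset.erase_insert (hxnot p.1 p.2)]
          · rw [if_neg hps] at hA'
            exact absurd (hA' ▸ hmem) (fun h => hxnot p.1 p.2 (hA' ▸ hmem))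
        · rintro ⟨hps, hfB⟩
          rw [if_pos hps, hps, hfB, hB, Finset.insert_erase hmem]
      rw [hfeq, pairhelper B, hs2 B hBsub, bdel]
      have hBk : B.card < k := by omega
      rw [if_pos hBk]
      congr 1
      omega
    · -- case xl ∉ A
      have hAsub' : ∀ x ∈ A, (x : ℕ) < ℓ := by
        intro x hx
        have h' := hAsub x hx
        by_contra hno
        push_neg at hno
        have hxe : (x : ℕ) = ℓ := by omega
        exact hmem (by rwa [show x = xl from Fin.ext (by rw [hxe, hxl])] at hx)
      have hold := h4 A hAk hAsub'
      have hsplit := Finset.card_filter_add_card_filter_not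
        (s := Finset.univ.filter (fun p : Fin M × Fin m => f p.1 p.2 = A))
        (fun p => p.2 = s p.1)
      have c1 : ((Finset.univ.filter (fun p : Fin M × Fin m => f p.1 p.2 = A)).filter
           (fun p => p.2 = s p.1)).card = bdel n k ℓ A := by
        rw [Finset.filter_filter]
        have heq2 : (Finset.univ.filter fun p : Fin M × Fin m => f p.1 p.2 = A ∧ p.2 = s p.1)
            = (Finset.univ.filter fun p : Fin M × Fin m =>
                p.2 = s p.1 ∧ f p.1 (s p.1) = A) := by
          apply Finset.filter_congr
          intro p _
          constructor
          · rintro ⟨hfa, hps⟩; exact ⟨hps, by rw [← hps]; exact hfa⟩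
          · rintro ⟨hps, hfa⟩; exact ⟨by rw [hps]; exact hfa, hps⟩
        rw [heq2, pairhelper A, hs2 A hAsub']
      have c2 : ((Finset.univ.filter (fun p : Fin M × Fin m => f p.1 p.2 = A)).filter
           (fun p => ¬ p.2 = s p.1)).card
          = (Finset.univ.filter (fun p : Fin M × Fin m => f' p.1 p.2 = A)).card := by
        rw [Finset.filter_filter]
        congr 1
        apply Finset.filter_congr
        intro p _
        constructor
        · rintro ⟨hfa, hps⟩
          rw [hf'val, if_neg hps]
          exact hfa
        · intro hA'
          rw [hf'val] at hA'
          by_cases hps : p.2 = s p.1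
          · rw [if_pos hps] at hA'
            exact absurd (hA' ▸ Finset.mem_insert_self xl (f p.1 p.2)) hmem
          · rw [if_neg hps] at hA'
            exact ⟨hA', hps⟩
      rw [c1, c2, hold] at hsplit
      by_cases hAk' : A.card < k
      · obtain ⟨N, hN⟩ : ∃ N, n - ℓ = N + 1 := ⟨n - ℓ - 1, by omega⟩
        obtain ⟨K, hK⟩ : ∃ K, k - A.card = K + 1 := ⟨k - A.card - 1, by omega⟩
        have hb : bdel n k ℓ A = N.choose K := by
          rw [bdel, if_pos hAk']
          congr 1 <;> omega
        have ht1 : (n - ℓ).choose (k - A.card) = N.choose K + N.choose (K + 1) := by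
          rw [hN, hK]
          exact Nat.choose_succ_succ N K
        have ht2 : (n - (ℓ + 1)).choose (k - A.card) = N.choose (K + 1) := by
          rw [hK]
          congr 1
          omega
        rw [ht2]
        omega
      · rw [bdel, if_neg hAk'] at hsplit
        have hz : k - A.card = 0 := by omega
        rw [hz] at hsplit ⊢
        rw [Nat.choose_zero_right] at hsplit ⊢
        omega

lemma baranyai_core {n k m M : ℕ} (hk : 0 < k) (hn : n = m * k)
    (hM : M = (n - 1).choose (k - 1)) :
    ∀ ℓ, ℓ ≤ n → ∃ f : Fin M → Fin m → Finset (Fin n),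
      (∀ i j, ∀ x ∈ f i j, (x : ℕ) < ℓ) ∧
      (∀ i j, (f i j).card ≤ k) ∧
      (∀ i, ∀ x : Fin n, (x : ℕ) < ℓ → ∃! j, x ∈ f i j) ∧
      (∀ A : Finset (Fin n), A.card ≤ k → (∀ x ∈ A, (x : ℕ) < ℓ) →
        (Finset.univ.filter (fun p : Fin M × Fin m => f p.1 p.2 = A)).card
          = (n - ℓ).choose (k - A.card)) := by
  intro ℓ
  induction ℓ with
  | zero =>
    intro _
    refine ⟨fun _ _ => ∅, ?_, ?_, ?_, ?_⟩
    · intro i j x hx; simp at hx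
    · intro i j; simp
    · intro i x hx; exact absurd hx (by omega)
    · intro A hAk hA0
      have hAe : A = ∅ := by
        rcases Finset.eq_empty_or_nonempty A with h | h
        · exact h
        · obtain ⟨x, hx⟩ := h; exact absurd (hA0 x hx) (by omega)
      subst hAe
      simp only [Finset.card_empty, Nat.sub_zero]
      rw [Finset.filter_true, Finset.card_univ]
      have hmk : M * m = n.choose k := by
        rcases Nat.eq_zero_or_pos m with hm | hm
        · subst hm
          simp only [Nat.zero_mul] at hn
          subst hn
          rw [Nat.choose_eq_zero_of_lt hk]
          simp
        · have hn1 : 0 < n := hn ▸ Nat.mul_pos hm hk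
          have h5 := Nat.add_one_mul_choose_eq (n - 1) (k - 1)
          have e1 : n - 1 + 1 = n := by omega
          have e2 : k - 1 + 1 = k := by omega
          rw [e1, e2] at h5
          apply Nat.eq_of_mul_eq_mul_right hk
          calc M * m * k = M * (m * k) := by ring
            _ = M * n := by rw [← hn]
            _ = n * (n - 1).choose (k - 1) := by rw [hM]; ring
            _ = n.choose k * k := h5
      simp only [Fintype.card_prod, Fintype.card_fin]
      exact hmk
  | succ ℓ ih =>
    intro hsucc
    obtain ⟨f, h1, h2, h3, h4⟩ := ih (by omega)
    exact baranyai_step hk hn hM ℓ (by omega) f h1 h2 h3 h4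

theorem baranyai' {n k : ℕ} (hk : 0 < k) (hdvd : k ∣ n) :
    ∃ P : Fin (Nat.choose (n - 1) (k - 1)) → Finset (Finset (Fin n)),
      (∀ i, ∀ J ∈ P i, J.card = k) ∧
      (∀ i, ∀ J ∈ P i, ∀ J' ∈ P i, J ≠ J' → Disjoint J J') ∧
      (∀ i, (P i).biUnion id = Finset.univ) ∧
      (∀ J : Finset (Fin n), J.card = k → ∃! i, J ∈ P i) := by
  classical
  obtain ⟨m, hm⟩ := hdvd
  have hn : n = m * k := by rw [hm]; ring
  obtain ⟨f, h1, h2, h3, h4⟩ :=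
    baranyai_core (M := (n - 1).choose (k - 1)) hk hn rfl n le_rfl
  have hcard : ∀ i j, (f i j).card = k := by
    intro i j
    have hc := h4 (f i j) (h2 i j) (fun x _ => x.isLt)
    have hpos : 0 < (Finset.univ.filter
        (fun p : Fin ((n - 1).choose (k - 1)) × Fin m => f p.1 p.2 = f i j)).card :=
      Finset.card_pos.mpr ⟨(i, j), Finset.mem_filter.mpr ⟨Finset.mem_univ _, rfl⟩⟩
    rw [hc, Nat.sub_self] at hpos
    by_contra hne
    have hlt : (f i j).card < k := lt_of_le_of_ne (h2 i j) hne
    rw [Nat.choose_eq_zero_of_lt (by omega)] at hpos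
    exact lt_irrefl 0 hpos
  refine ⟨fun i => Finset.univ.image (f i), ?_, ?_, ?_, ?_⟩
  · intro i J hJ
    obtain ⟨j, -, hj⟩ := Finset.mem_image.mp hJ
    rw [← hj]; exact hcard i j
  · intro i J hJ J' hJ' hne
    obtain ⟨j, -, hj⟩ := Finset.mem_image.mp hJ
    obtain ⟨j', -, hj'⟩ := Finset.mem_image.mp hJ'
    rw [Finset.disjoint_left]
    intro x hxJ hxJ'
    obtain ⟨j₀, -, huniq⟩ := h3 i x x.isLt
    have e1 := huniq j (show x ∈ f i j by rw [hj]; exact hxJ)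
    have e2 := huniq j' (show x ∈ f i j' by rw [hj']; exact hxJ')
    exact hne (by rw [← hj, ← hj', e1.trans e2.symm])
  · intro i
    apply Finset.eq_univ_iff_forall.mpr
    intro x
    obtain ⟨j, hj, -⟩ := h3 i x x.isLt
    exact Finset.mem_biUnion.mpr ⟨f i j,
      Finset.mem_image_of_mem _ (Finset.mem_univ j), hj⟩
  · intro J hJk
    have hcnt := h4 J (le_of_eq hJk) (fun x _ => x.isLt)
    rw [Nat.sub_self, hJk, Nat.sub_self, Nat.choose_self] at hcnt
    obtain ⟨p₀, hp₀⟩ := Finset.card_eq_one.mp hcnt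
    have hp₀mem : p₀ ∈ Finset.univ.filter
        (fun p : Fin ((n - 1).choose (k - 1)) × Fin m => f p.1 p.2 = J) := by
      rw [hp₀]; exact Finset.mem_singleton_self p₀
    refine ⟨p₀.1, ?_, ?_⟩
    · exact Finset.mem_image.mpr ⟨p₀.2, Finset.mem_univ _,
        (Finset.mem_filter.mp hp₀mem).2⟩
    · intro i hi
      obtain ⟨j, -, hj⟩ := Finset.mem_image.mp hi
      have hmemf : (i, j) ∈ Finset.univ.filter
          (fun p : Fin ((n - 1).choose (k - 1)) × Fin m => f p.1 p.2 = J) :=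
        Finset.mem_filter.mpr ⟨Finset.mem_univ _, hj⟩
      rw [hp₀, Finset.mem_singleton] at hmemf
      exact congrArg Prod.fst hmemf


/-- Baranyai's theorem: for `k ∣ n` the `k`-subsets of `[n]` can be
partitioned into `C(n−1,k−1)` perfect matchings. -/
theorem baranyai {n k : ℕ} (hk : 0 < k) (hdvd : k ∣ n) :
    ∃ P : Fin (Nat.choose (n - 1) (k - 1)) → Finset (Finset (Fin n)),
      (∀ i, ∀ J ∈ P i, J.card = k) ∧
      (∀ i, ∀ J ∈ P i, ∀ J' ∈ P i, J ≠ J' → Disjoint J J') ∧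
      (∀ i, (P i).biUnion id = Finset.univ) ∧
      (∀ J : Finset (Fin n), J.card = k → ∃! i, J ∈ P i) := by
  exact baranyai' hk hdvd
end
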